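/- arXiv:1601.06231 — 7 statements merged into one kernel-verified Lean document; each statement's English description precedes it below -/
import Mathlib

section
/- Let A and B be positive semidefinite operators on a finite-dimensional complex Hilbert space. Then the operator Y° = B + (A − B)_+ is an optimal solution of the problem of minimizing Tr Y over all operators Y satisfying Y ≥ A and Y ≥ B; that is, Y° ≥ A, Y° ≥ B, and for every Y with Y ≥ A and Y ≥ B one has Tr Y ≥ Tr Y°. -/
open Matrix
open scoped ComplexOrder

/-- Positive part `A₊` of a Hermitian matrix (junk value `0` on non-Hermitian input). -/
noncomputable def matPosPart {n : ℕ} (A : Matrix (Fin n) (Fin n) ℂ) : Matrix (Fin n) (Fin n) ℂ :=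
  if hA : A.IsHermitian then
    (hA.eigenvectorUnitary : Matrix (Fin n) (Fin n) ℂ) *
      Matrix.diagonal (fun i => if 0 < hA.eigenvalues i then (hA.eigenvalues i : ℂ) else 0) *
      star (hA.eigenvectorUnitary : Matrix (Fin n) (Fin n) ℂ)
  else 0

/-- Projection `P₍>₎(A)` onto the span of eigenvectors of positive eigenvalues. -/
noncomputable def matProjPos {n : ℕ} (A : Matrix (Fin n) (Fin n) ℂ) : Matrix (Fin n) (Fin n) ℂ :=
  if hA : A.IsHermitian then
    (hA.eigenvectorUnitary : Matrix (Fin n) (Fin n) ℂ) *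
      Matrix.diagonal (fun i => if 0 < hA.eigenvalues i then (1 : ℂ) else 0) *
      star (hA.eigenvectorUnitary : Matrix (Fin n) (Fin n) ℂ)
  else 0

/-- Projection `P₍≥₎(A)` onto the span of eigenvectors of nonnegative eigenvalues. -/
noncomputable def matProjNonneg {n : ℕ} (A : Matrix (Fin n) (Fin n) ℂ) : Matrix (Fin n) (Fin n) ℂ :=
  if hA : A.IsHermitian then
    (hA.eigenvectorUnitary : Matrix (Fin n) (Fin n) ℂ) *
      Matrix.diagonal (fun i => if 0 ≤ hA.eigenvalues i then (1 : ℂ) else 0) *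
      star (hA.eigenvectorUnitary : Matrix (Fin n) (Fin n) ℂ)
  else 0

lemma psd_diag_nonneg {n : ℕ} {M : Matrix (Fin n) (Fin n) ℂ} (h : M.PosSemidef) (i : Fin n) :
    0 ≤ M i i := by
  exact h.diag_nonneg

/-- For positive semidefinite `A`, `B`, the operator `Y° = B + (A − B)₊`
is an optimal solution of minimizing `Tr Y` subject to `Y ≥ A`, `Y ≥ B`. -/
theorem stmt_0 {n : ℕ} (A B : Matrix (Fin n) (Fin n) ℂ)
    (hA : A.PosSemidef) (hB : B.PosSemidef) :
    (B + matPosPart (A - B) - A).PosSemidef ∧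
    (B + matPosPart (A - B) - B).PosSemidef ∧
    ∀ Y : Matrix (Fin n) (Fin n) ℂ, (Y - A).PosSemidef → (Y - B).PosSemidef →
      (B + matPosPart (A - B)).trace.re ≤ Y.trace.re := by
  have hC : (A - B).IsHermitian := hA.1.sub hB.1
  set C := A - B with hCdef
  set U : Matrix (Fin n) (Fin n) ℂ := (hC.eigenvectorUnitary : Matrix (Fin n) (Fin n) ℂ) with hU
  have hu1 : star U * U = 1 := (Unitary.mem_iff.mp hC.eigenvectorUnitary.2).1
  have hu2 : U * star U = 1 := (Unitary.mem_iff.mp hC.eigenvectorUnitary.2).2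
  set ev : Fin n → ℝ := hC.eigenvalues with hev
  set Dp : Matrix (Fin n) (Fin n) ℂ :=
    Matrix.diagonal (fun i => if 0 < ev i then (ev i : ℂ) else 0) with hDp
  set D : Matrix (Fin n) (Fin n) ℂ := Matrix.diagonal (RCLike.ofReal ∘ ev) with hD
  have hPP : matPosPart C = U * Dp * star U := by rw [matPosPart, dif_pos hC]
  have hspec : C = U * D * star U := hC.spectral_theorem
  clear_value U ev Dp D
  have hdiag : Dp - D = Matrix.diagonal
      (fun i => (if 0 < ev i then ((ev i : ℝ) : ℂ) else 0) - ((ev i : ℝ) : ℂ)) := by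
    rw [hDp, hD, Matrix.diagonal_sub]
    rfl
  -- part 1
  have h1 : (B + matPosPart C - A).PosSemidef := by
    have heq : B + matPosPart C - A = U * (Dp - D) * star U := by
      rw [mul_sub, sub_mul, ← hPP, ← hspec]; rw [hCdef]; abel
    rw [heq, hdiag, star_eq_conjTranspose]
    refine Matrix.PosSemidef.mul_mul_conjTranspose_same (Matrix.posSemidef_diagonal_iff.mpr ?_) U
    intro i
    by_cases h : 0 < ev i
    · simp [h]
    · simp only [h, ite_false, zero_sub]
      rw [← Complex.ofReal_neg, Complex.zero_le_real]
      linarith [not_lt.mp h]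
  -- part 2
  have h2 : (B + matPosPart C - B).PosSemidef := by
    have heq : B + matPosPart C - B = U * Dp * star U := by rw [← hPP]; abel
    rw [heq, hDp, star_eq_conjTranspose]
    refine Matrix.PosSemidef.mul_mul_conjTranspose_same (Matrix.posSemidef_diagonal_iff.mpr ?_) U
    intro i
    by_cases h : 0 < ev i
    · simpa [h, Complex.zero_le_real] using le_of_lt h
    · simp [h]
  refine ⟨h1, h2, ?_⟩
  -- part 3
  intro Y hYA hYB
  have hDC : star U * C * U = D := by
    rw [hspec, show star U * (U * D * star U) * U = star U * U * D * (star U * U) by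
      noncomm_ring, hu1, Matrix.one_mul, Matrix.mul_one]
  set M : Matrix (Fin n) (Fin n) ℂ := star U * (Y - B) * U with hMdef
  have hM : M.PosSemidef := by
    rw [hMdef, star_eq_conjTranspose]
    exact hYB.conjTranspose_mul_mul_same U
  have hMD : (M - D).PosSemidef := by
    have : M - D = star U * (Y - A) * U := by
      rw [hMdef, ← hDC, ← Matrix.sub_mul, ← Matrix.mul_sub, hCdef]
      congr 1
      congr 1
      abel
    rw [this, star_eq_conjTranspose]
    exact hYA.conjTranspose_mul_mul_same U
  have htr1 : (B + matPosPart C).trace = B.trace + Dp.trace := by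
    rw [Matrix.trace_add, hPP, Matrix.trace_mul_cycle, hu1, Matrix.one_mul]
  have htrM : M.trace = Y.trace - B.trace := by
    rw [hMdef, Matrix.trace_mul_cycle, hu2, Matrix.one_mul, Matrix.trace_sub]
  have key : Dp.trace.re ≤ M.trace.re := by
    rw [hDp, Matrix.trace_diagonal, Matrix.trace]
    rw [Complex.re_sum, Complex.re_sum]
    refine Finset.sum_le_sum fun i _ => ?_
    have d1 := (Complex.le_def.mp (psd_diag_nonneg hM i)).1
    have d2 := (Complex.le_def.mp (psd_diag_nonneg hMD i)).1
    rw [Matrix.sub_apply, hD, Matrix.diagonal_apply_eq] at d2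
    simp only [Complex.zero_re, Complex.sub_re, Function.comp_apply] at d1 d2
    rw [show ((RCLike.ofReal (ev i) : ℂ)).re = ev i from Complex.ofReal_re _] at d2
    by_cases h : 0 < ev i
    · simpa [h] using by linarith
    · simpa [h] using d1
  have := key
  calc (B + matPosPart C).trace.re = B.trace.re + Dp.trace.re := by
        rw [htr1, Complex.add_re]
    _ ≤ B.trace.re + M.trace.re := by linarith
    _ = Y.trace.re := by rw [htrM, Complex.sub_re]; ring
end

section
/- For every quantum state set ρ_0,…,ρ_{M-1} and every M-outcome POVM Π_0,…,Π_{M-1}, the success probability satisfies P_C(Π) = Σ_m Tr(ρ_m Π_m) ≤ P_C^up = Tr X_{M-1}. Consequently the optimal success probability P_C^opt = max_Π P_C(Π) satisfies P_C^up ≥ P_C^opt. -/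
open Matrix
open scoped ComplexOrder

/-- The recursion `X₀ = ρ₀`, `X_{m+1} = X_m + (ρ_{m+1} − X_m)₊`. -/
noncomputable def Xseq {n : ℕ} (ρ : ℕ → Matrix (Fin n) (Fin n) ℂ) : ℕ → Matrix (Fin n) (Fin n) ℂ
  | 0 => ρ 0
  | m + 1 => Xseq ρ m + matPosPart (ρ (m + 1) - Xseq ρ m)

private lemma psd_trace_re_nonneg {n : ℕ} {A : Matrix (Fin n) (Fin n) ℂ}
    (hA : A.PosSemidef) : 0 ≤ A.trace.re := by
  have h : ∀ i, 0 ≤ (A i i).re := by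
    intro i
    have := hA.re_dotProduct_nonneg (Pi.single i 1)
    simpa [dotProduct, mulVec, Pi.single_apply, Finset.sum_ite_eq] using this
  simpa [Matrix.trace, Matrix.diag, Complex.re_sum] using
    Finset.sum_nonneg fun i _ => h i

open scoped MatrixOrder in
private lemma mul_trace_re_nonneg {n : ℕ} {X Y : Matrix (Fin n) (Fin n) ℂ}
    (hX : X.PosSemidef) (hY : Y.PosSemidef) : 0 ≤ ((X * Y).trace).re := by
  have h1 : X * Y = CFC.sqrt X * (CFC.sqrt X * Y) := by
    rw [← mul_assoc, CFC.sqrt_mul_sqrt_self X hX.nonneg]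
  have h2 : (X * Y).trace = (CFC.sqrt X * Y * CFC.sqrt X).trace := by
    rw [h1, Matrix.trace_mul_comm, mul_assoc]
  have h3 : (CFC.sqrt X * Y * CFC.sqrt X).PosSemidef := by
    have := hY.conjTranspose_mul_mul_same (CFC.sqrt X)
    rwa [(CFC.sqrt_nonneg X).posSemidef.1.eq] at this
  rw [h2]
  exact psd_trace_re_nonneg h3

private lemma conj_diag_psd {n : ℕ} {A : Matrix (Fin n) (Fin n) ℂ} (hA : A.IsHermitian)
    (d : Fin n → ℂ) (hd : ∀ i, 0 ≤ d i) :
    ((hA.eigenvectorUnitary : Matrix (Fin n) (Fin n) ℂ) * Matrix.diagonal d *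
      star (hA.eigenvectorUnitary : Matrix (Fin n) (Fin n) ℂ)).PosSemidef := by
  rw [star_eq_conjTranspose]
  exact (Matrix.posSemidef_diagonal_iff.mpr hd).mul_mul_conjTranspose_same _

private lemma matPosPart_psd {n : ℕ} {A : Matrix (Fin n) (Fin n) ℂ} (hA : A.IsHermitian) :
    (matPosPart A).PosSemidef := by
  rw [matPosPart, dif_pos hA]
  refine conj_diag_psd hA _ fun i => ?_
  split_ifs with h
  · exact Complex.zero_le_real.mpr h.le
  · exact le_rfl

private lemma matPosPart_sub_psd {n : ℕ} {A : Matrix (Fin n) (Fin n) ℂ} (hA : A.IsHermitian) :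
    (matPosPart A - A).PosSemidef := by
  have hspec := hA.spectral_theorem
  rw [matPosPart, dif_pos hA]
  have : (hA.eigenvectorUnitary : Matrix (Fin n) (Fin n) ℂ) *
      Matrix.diagonal (fun i => if 0 < hA.eigenvalues i then (hA.eigenvalues i : ℂ) else 0) *
      star (hA.eigenvectorUnitary : Matrix (Fin n) (Fin n) ℂ) - A =
      (hA.eigenvectorUnitary : Matrix (Fin n) (Fin n) ℂ) *
      Matrix.diagonal (fun i => (if 0 < hA.eigenvalues i then (hA.eigenvalues i : ℂ) else 0)
        - (hA.eigenvalues i : ℂ)) *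
      star (hA.eigenvectorUnitary : Matrix (Fin n) (Fin n) ℂ) := by
    have hd : Matrix.diagonal (fun i => (if 0 < hA.eigenvalues i then (hA.eigenvalues i : ℂ) else 0)
        - (hA.eigenvalues i : ℂ)) =
        Matrix.diagonal (fun i => if 0 < hA.eigenvalues i then (hA.eigenvalues i : ℂ) else 0)
        - Matrix.diagonal (RCLike.ofReal ∘ hA.eigenvalues) := by
      rw [← Matrix.diagonal_sub]; rfl
    simp only [Unitary.conjStarAlgAut_apply, Unitary.coe_star] at hspec
    rw [hd, Matrix.mul_sub, Matrix.sub_mul, ← hspec]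
  rw [this]
  refine conj_diag_psd hA _ fun i => ?_
  split_ifs with h
  · simp
  · push_neg at h
    rw [zero_sub, ← Complex.ofReal_neg]
    exact Complex.zero_le_real.mpr (by linarith)

private lemma psd_sum {n : ℕ} (f : ℕ → Matrix (Fin n) (Fin n) ℂ) (s : Finset ℕ)
    (h : ∀ m ∈ s, (f m).PosSemidef) : (∑ m ∈ s, f m).PosSemidef := by
  classical
  induction s using Finset.induction_on with
  | empty => simpa using Matrix.PosSemidef.zero
  | insert _ _ hx ih =>
    rw [Finset.sum_insert hx]
    exact (h _ (Finset.mem_insert_self _ _)).add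
      (ih fun m hm => h m (Finset.mem_insert_of_mem hm))

private lemma main_ind {n M : ℕ} (ρ Pm : ℕ → Matrix (Fin n) (Fin n) ℂ)
    (hρ : ∀ m < M, (ρ m).PosSemidef) (hP : ∀ m < M, (Pm m).PosSemidef) :
    ∀ k, k < M → (Xseq ρ k).PosSemidef ∧
      ∑ m ∈ Finset.range (k + 1), ((ρ m * Pm m).trace).re ≤
        ((Xseq ρ k) * (∑ m ∈ Finset.range (k + 1), Pm m)).trace.re := by
  intro k
  induction k with
  | zero => intro hk; exact ⟨hρ 0 hk, by simp [Xseq]⟩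
  | succ k ih =>
    intro hk
    obtain ⟨hXk, hsum⟩ := ih (Nat.lt_of_succ_lt hk)
    set Xk := Xseq ρ k with hXkdef
    have hHerm : (ρ (k + 1) - Xk).IsHermitian := ((hρ _ hk).1).sub hXk.1
    set P := matPosPart (ρ (k + 1) - Xk) with hPdef
    have hPpsd : P.PosSemidef := matPosPart_psd hHerm
    have hXk1 : Xseq ρ (k + 1) = Xk + P := rfl
    have hXk1psd : (Xseq ρ (k + 1)).PosSemidef := by rw [hXk1]; exact hXk.add hPpsd
    refine ⟨hXk1psd, ?_⟩
    set Qk := ∑ m ∈ Finset.range (k + 1), Pm m with hQkdef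
    have hQkpsd : Qk.PosSemidef := psd_sum _ _ fun m hm =>
      hP m (lt_of_lt_of_le (Finset.mem_range.mp hm) (Nat.le_of_succ_le hk))
    have hQ : ∑ m ∈ Finset.range (k + 2), Pm m = Qk + Pm (k + 1) := by
      rw [Finset.sum_range_succ]
    have hPm1 : (Pm (k + 1)).PosSemidef := hP _ hk
    -- inequality 1 : t (ρ(k+1) - Xk) Π ≤ t P Π
    have h1 : 0 ≤ (((P - (ρ (k + 1) - Xk)) * Pm (k + 1)).trace).re :=
      mul_trace_re_nonneg (matPosPart_sub_psd hHerm) hPm1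
    have h2 : 0 ≤ ((P * Qk).trace).re := mul_trace_re_nonneg hPpsd hQkpsd
    -- expand everything
    have e1 : ((P - (ρ (k + 1) - Xk)) * Pm (k + 1)).trace.re
        = (P * Pm (k + 1)).trace.re - (ρ (k + 1) * Pm (k + 1)).trace.re
          + (Xk * Pm (k + 1)).trace.re := by
      rw [Matrix.sub_mul, Matrix.sub_mul, Matrix.trace_sub, Matrix.trace_sub]
      simp [Complex.sub_re]
      ring
    have e2 : ((Xseq ρ (k + 1)) * (∑ m ∈ Finset.range (k + 2), Pm m)).trace.re
        = (Xk * Qk).trace.re + (Xk * Pm (k + 1)).trace.re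
          + (P * Qk).trace.re + (P * Pm (k + 1)).trace.re := by
      rw [hXk1, hQ, Matrix.add_mul, Matrix.mul_add, Matrix.mul_add, Matrix.trace_add,
        Matrix.trace_add, Matrix.trace_add]
      simp [Complex.add_re]
      ring
    rw [Finset.sum_range_succ, e2]
    rw [e1] at h1
    linarith

/-- For every quantum state set and every `M`-outcome POVM, the success
probability is at most `P_C^up = Tr X_{M-1}`; consequently `P_C^up ≥ P_C^opt`. -/
theorem stmt_2 {n M : ℕ} (hM : 0 < M) (ρ : ℕ → Matrix (Fin n) (Fin n) ℂ)
    (hρ : ∀ m < M, (ρ m).PosSemidef)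
    (hρpos : ∀ m < M, 0 < (ρ m).trace.re)
    (hρsum : ∑ m ∈ Finset.range M, (ρ m).trace.re = 1) :
    (∀ Pm : ℕ → Matrix (Fin n) (Fin n) ℂ,
        (∀ m < M, (Pm m).PosSemidef) → (∑ m ∈ Finset.range M, Pm m = 1) →
        ∑ m ∈ Finset.range M, ((ρ m * Pm m).trace).re ≤ (Xseq ρ (M - 1)).trace.re) ∧
    (∀ PCopt : ℝ,
      IsGreatest {x : ℝ | ∃ Pm : ℕ → Matrix (Fin n) (Fin n) ℂ,
          (∀ m < M, (Pm m).PosSemidef) ∧ (∑ m ∈ Finset.range M, Pm m = 1) ∧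
          x = ∑ m ∈ Finset.range M, ((ρ m * Pm m).trace).re} PCopt →
      PCopt ≤ (Xseq ρ (M - 1)).trace.re) := by
  have key : ∀ Pm : ℕ → Matrix (Fin n) (Fin n) ℂ,
      (∀ m < M, (Pm m).PosSemidef) → (∑ m ∈ Finset.range M, Pm m = 1) →
      ∑ m ∈ Finset.range M, ((ρ m * Pm m).trace).re ≤ (Xseq ρ (M - 1)).trace.re := by
    intro Pm hP hPsum
    have hMsucc : M - 1 + 1 = M := Nat.succ_pred_eq_of_pos hM
    have hlt : M - 1 < M := Nat.pred_lt hM.ne'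
    have := (main_ind ρ Pm hρ hP (M - 1) hlt).2
    rw [hMsucc, hPsum, mul_one] at this
    exact this
  refine ⟨key, fun PCopt hopt => ?_⟩
  obtain ⟨Pm, hP, hPsum, hx⟩ := hopt.1
  rw [hx]
  exact key Pm hP hPsum
end

section
/- For a quantum state set ρ_0,…,ρ_{M-1}, let P_C^up(k) denote the value Tr X_{M-1} of the recursion X_0 = ρ_0, X_{m+1} = X_m + (ρ_{m+1} − X_m)_+ applied to the state set obtained by permuting ρ_0 and ρ_k, and let P_C^Qiu(k) = Tr ρ_k + Σ_{m≠k} Tr((ρ_m − ρ_k)_+). Then min_{k∈{0,…,M-1}} P_C^up(k) ≤ min_{k∈{0,…,M-1}} P_C^Qiu(k); in particular, for every quantum state set, Tr ρ_0 + Σ_{m=0}^{M-2} Tr((ρ_{m+1} − X_m)_+) ≤ Tr ρ_0 + Σ_{m=0}^{M-2} Tr((ρ_{m+1} − ρ_0)_+). -/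
open Matrix
open scoped ComplexOrder

namespace StmtFourAux

variable {n : ℕ}

lemma trace_re_nonneg {A : Matrix (Fin n) (Fin n) ℂ} (hA : A.PosSemidef) :
    0 ≤ A.trace.re := by
  have h : ∀ i, 0 ≤ (A i i).re := by
    intro i
    have := hA.re_dotProduct_nonneg (Pi.single i 1)
    simpa [dotProduct, Matrix.mulVec, Pi.single_apply, apply_ite,
      Finset.sum_ite_eq, Finset.sum_ite_eq'] using this
  rw [Matrix.trace, Complex.re_sum]
  exact Finset.sum_nonneg fun i _ => h i

lemma trace_mul_re_nonneg {P Q : Matrix (Fin n) (Fin n) ℂ}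
    (hP : P.PosSemidef) (hQ : Q.PosSemidef) : 0 ≤ (P * Q).trace.re := by
  obtain ⟨B, rfl⟩ : ∃ B : Matrix (Fin n) (Fin n) ℂ, P = Bᴴ * B := by
    open scoped MatrixOrder in
    obtain ⟨B, hB⟩ := CStarAlgebra.nonneg_iff_eq_star_mul_self.mp hP.nonneg
    exact ⟨B, hB⟩
  have h : (Bᴴ * B * Q).trace = (B * Q * Bᴴ).trace := (Matrix.trace_mul_cycle B Q Bᴴ).symm
  rw [h]
  exact trace_re_nonneg (hQ.mul_mul_conjTranspose_same B)

section Spectral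

variable {A : Matrix (Fin n) (Fin n) ℂ} (hA : A.IsHermitian)

local notation "U" => (hA.eigenvectorUnitary : Matrix (Fin n) (Fin n) ℂ)

lemma star_mul_self_eq_one : star U * U = 1 :=
  Matrix.mem_unitaryGroup_iff'.mp hA.eigenvectorUnitary.2

lemma mul_star_self_eq_one : U * star U = 1 :=
  Matrix.mem_unitaryGroup_iff.mp hA.eigenvectorUnitary.2

lemma conj_trace (D : Matrix (Fin n) (Fin n) ℂ) : (U * D * star U).trace = D.trace := by
  rw [Matrix.trace_mul_cycle, star_mul_self_eq_one hA, one_mul]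

lemma conj_mul (D₁ D₂ : Matrix (Fin n) (Fin n) ℂ) :
    (U * D₁ * star U) * (U * D₂ * star U) = U * (D₁ * D₂) * star U := by
  have h' : ∀ Y : Matrix (Fin n) (Fin n) ℂ, star U * (U * Y) = Y := fun Y => by
    rw [← mul_assoc, star_mul_self_eq_one hA, one_mul]
  simp only [mul_assoc, h']

lemma conj_sub (D₁ D₂ : Matrix (Fin n) (Fin n) ℂ) :
    U * D₁ * star U - U * D₂ * star U = U * (D₁ - D₂) * star U := by
  rw [Matrix.mul_sub, Matrix.sub_mul]

lemma conj_diag_posSemidef (f : Fin n → ℂ) (hf : ∀ i, 0 ≤ f i) :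
    (U * Matrix.diagonal f * star U).PosSemidef := by
  rw [Matrix.star_eq_conjTranspose]
  exact (Matrix.PosSemidef.diagonal fun i => hf i).mul_mul_conjTranspose_same _

end Spectral

lemma matPosPart_posSemidef (A : Matrix (Fin n) (Fin n) ℂ) : (matPosPart A).PosSemidef := by
  unfold matPosPart
  split_ifs with hA
  · refine conj_diag_posSemidef hA _ fun i => ?_
    split_ifs with h
    · exact_mod_cast h.le
    · exact le_refl 0
  · exact Matrix.PosSemidef.zero

lemma matProjPos_posSemidef (A : Matrix (Fin n) (Fin n) ℂ) : (matProjPos A).PosSemidef := by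
  unfold matProjPos
  split_ifs with hA
  · refine conj_diag_posSemidef hA _ fun i => ?_
    split_ifs <;> norm_num
  · exact Matrix.PosSemidef.zero

lemma one_sub_matProjPos_posSemidef {A : Matrix (Fin n) (Fin n) ℂ} (hA : A.IsHermitian) :
    (1 - matProjPos A).PosSemidef := by
  have key : (1 : Matrix (Fin n) (Fin n) ℂ) - matProjPos A =
      (hA.eigenvectorUnitary : Matrix (Fin n) (Fin n) ℂ) *
        (Matrix.diagonal (fun _ => (1 : ℂ))
          - Matrix.diagonal (fun i => if 0 < hA.eigenvalues i then (1 : ℂ) else 0)) *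
        star (hA.eigenvectorUnitary : Matrix (Fin n) (Fin n) ℂ) := by
    rw [matProjPos, dif_pos hA, ← conj_sub hA]
    congr 1
    rw [Matrix.diagonal_one, mul_one, mul_star_self_eq_one hA]
  rw [key, Matrix.diagonal_sub]
  refine conj_diag_posSemidef hA _ fun i => ?_
  split_ifs <;> norm_num

lemma matPosPart_sub_posSemidef {A : Matrix (Fin n) (Fin n) ℂ} (hA : A.IsHermitian) :
    (matPosPart A - A).PosSemidef := by
  have key := conj_sub hA
    (Matrix.diagonal (fun i => if 0 < hA.eigenvalues i then (hA.eigenvalues i : ℂ) else 0))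
    (Matrix.diagonal (RCLike.ofReal ∘ hA.eigenvalues))
  rw [← Unitary.conjStarAlgAut_apply (S := ℂ) (x := Matrix.diagonal (RCLike.ofReal ∘ hA.eigenvalues)),
    ← hA.spectral_theorem] at key
  rw [matPosPart, dif_pos hA, key, Matrix.diagonal_sub]
  refine conj_diag_posSemidef hA _ fun i => ?_
  simp only [Pi.sub_apply, Function.comp_apply]
  split_ifs with h
  · simp
  · push_neg at h
    rw [zero_sub]
    rw [show ((RCLike.ofReal (hA.eigenvalues i) : ℂ)) = ((hA.eigenvalues i : ℝ) : ℂ) from rfl,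
      ← Complex.ofReal_neg]
    exact_mod_cast neg_nonneg.mpr h

lemma trace_projPos_mul {A : Matrix (Fin n) (Fin n) ℂ} (hA : A.IsHermitian) :
    (matProjPos A * A).trace = (matPosPart A).trace := by
  have key := conj_mul hA
    (Matrix.diagonal (fun i => if 0 < hA.eigenvalues i then (1 : ℂ) else 0))
    (Matrix.diagonal (RCLike.ofReal ∘ hA.eigenvalues))
  rw [← Unitary.conjStarAlgAut_apply (S := ℂ) (x := Matrix.diagonal (RCLike.ofReal ∘ hA.eigenvalues)),
    ← hA.spectral_theorem] at key
  rw [matProjPos, dif_pos hA, matPosPart, dif_pos hA, key, conj_trace hA,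
    conj_trace hA, Matrix.diagonal_mul_diagonal, Matrix.trace_diagonal, Matrix.trace_diagonal]
  refine Finset.sum_congr rfl fun i _ => ?_
  simp only [Function.comp_apply]
  split_ifs <;> simp

lemma trace_posPart_mono {A B : Matrix (Fin n) (Fin n) ℂ}
    (hA : A.IsHermitian) (hB : B.IsHermitian) (h : (B - A).PosSemidef) :
    (matPosPart A).trace.re ≤ (matPosPart B).trace.re := by
  set P := matProjPos A with hP
  have hPpsd := matProjPos_posSemidef A
  have h1 : 0 ≤ (P * (B - A)).trace.re := trace_mul_re_nonneg hPpsd h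
  have h2 : 0 ≤ (P * (matPosPart B - B)).trace.re :=
    trace_mul_re_nonneg hPpsd (matPosPart_sub_posSemidef hB)
  have h3 : 0 ≤ ((1 - P) * matPosPart B).trace.re :=
    trace_mul_re_nonneg (one_sub_matProjPos_posSemidef hA) (matPosPart_posSemidef B)
  have e0 : (matPosPart A).trace.re = (P * A).trace.re := by
    rw [trace_projPos_mul hA]
  have e1 : (P * (B - A)).trace.re = (P * B).trace.re - (P * A).trace.re := by
    rw [Matrix.mul_sub, Matrix.trace_sub, Complex.sub_re]
  have e2 : (P * (matPosPart B - B)).trace.re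
      = (P * matPosPart B).trace.re - (P * B).trace.re := by
    rw [Matrix.mul_sub, Matrix.trace_sub, Complex.sub_re]
  have e3 : ((1 - P) * matPosPart B).trace.re
      = (matPosPart B).trace.re - (P * matPosPart B).trace.re := by
    rw [Matrix.sub_mul, Matrix.trace_sub, Complex.sub_re, Matrix.one_mul]
  rw [e1] at h1; rw [e2] at h2; rw [e3] at h3
  linarith

lemma Xseq_isHermitian (ρ : ℕ → Matrix (Fin n) (Fin n) ℂ) (h0 : (ρ 0).IsHermitian) :
    ∀ m, (Xseq ρ m).IsHermitian
  | 0 => h0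
  | m + 1 => (Xseq_isHermitian ρ h0 m).add (matPosPart_posSemidef _).isHermitian

lemma Xseq_sub_posSemidef (ρ : ℕ → Matrix (Fin n) (Fin n) ℂ) :
    ∀ m, (Xseq ρ m - ρ 0).PosSemidef
  | 0 => by simpa [Xseq] using Matrix.PosSemidef.zero
  | m + 1 => by
      have h : Xseq ρ (m + 1) - ρ 0
          = (Xseq ρ m - ρ 0) + matPosPart (ρ (m + 1) - Xseq ρ m) := by
        show Xseq ρ m + matPosPart (ρ (m + 1) - Xseq ρ m) - ρ 0 = _
        abel
      rw [h]
      exact (Xseq_sub_posSemidef ρ m).add (matPosPart_posSemidef _)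

lemma trace_Xseq (ρ : ℕ → Matrix (Fin n) (Fin n) ℂ) :
    ∀ N, (Xseq ρ N).trace.re
      = (ρ 0).trace.re + ∑ m ∈ Finset.range N, (matPosPart (ρ (m + 1) - Xseq ρ m)).trace.re
  | 0 => by simp [Xseq]
  | N + 1 => by
      rw [Finset.sum_range_succ, ← add_assoc, ← trace_Xseq ρ N]
      show (Xseq ρ N + matPosPart (ρ (N + 1) - Xseq ρ N)).trace.re = _
      rw [Matrix.trace_add, Complex.add_re]

lemma core {M : ℕ} (ρ : ℕ → Matrix (Fin n) (Fin n) ℂ)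
    (hH : ∀ m < M, (ρ m).IsHermitian) :
    ∑ m ∈ Finset.range (M - 1), (matPosPart (ρ (m + 1) - Xseq ρ m)).trace.re
      ≤ ∑ m ∈ Finset.range (M - 1), (matPosPart (ρ (m + 1) - ρ 0)).trace.re := by
  refine Finset.sum_le_sum fun m hm => ?_
  have hm' := Finset.mem_range.mp hm
  have h1 : m + 1 < M := by omega
  have h0 : 0 < M := by omega
  have hHm := hH (m + 1) h1
  have hH0 := hH 0 h0
  refine trace_posPart_mono (hHm.sub (Xseq_isHermitian ρ hH0 m)) (hHm.sub hH0) ?_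
  have e : (ρ (m + 1) - ρ 0) - (ρ (m + 1) - Xseq ρ m) = Xseq ρ m - ρ 0 := by abel
  rw [e]
  exact Xseq_sub_posSemidef ρ m

end StmtFourAux


open StmtFourAux

/-- `min_k P_C^up(k) ≤ min_k P_C^Qiu(k)`, where `P_C^up(k)` is `Tr X_{M-1}`
for the state set with `ρ₀` and `ρ_k` permuted and
`P_C^Qiu(k) = Tr ρ_k + Σ_{m≠k} Tr((ρ_m − ρ_k)₊)`; in particular
`Tr ρ₀ + Σ_m Tr((ρ_{m+1} − X_m)₊) ≤ Tr ρ₀ + Σ_m Tr((ρ_{m+1} − ρ₀)₊)`. -/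
theorem stmt_4 {n M : ℕ} (hM : 0 < M) (ρ : ℕ → Matrix (Fin n) (Fin n) ℂ)
    (hρ : ∀ m < M, (ρ m).PosSemidef)
    (hρpos : ∀ m < M, 0 < (ρ m).trace.re)
    (hρsum : ∑ m ∈ Finset.range M, (ρ m).trace.re = 1) :
    (Finset.range M).inf' (Finset.nonempty_range_iff.mpr hM.ne')
        (fun k => (Xseq (fun m => ρ (Equiv.swap 0 k m)) (M - 1)).trace.re) ≤
      (Finset.range M).inf' (Finset.nonempty_range_iff.mpr hM.ne')
        (fun k => (ρ k).trace.re +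
          ∑ m ∈ (Finset.range M).erase k, (matPosPart (ρ m - ρ k)).trace.re) ∧
    (ρ 0).trace.re + ∑ m ∈ Finset.range (M - 1), (matPosPart (ρ (m + 1) - Xseq ρ m)).trace.re ≤
      (ρ 0).trace.re + ∑ m ∈ Finset.range (M - 1), (matPosPart (ρ (m + 1) - ρ 0)).trace.re := by
  have hH : ∀ m < M, (ρ m).IsHermitian := fun m hm => (hρ m hm).isHermitian
  constructor
  · -- min inequality
    have key : ∀ k ∈ Finset.range M,
        (Xseq (fun m => ρ (Equiv.swap 0 k m)) (M - 1)).trace.re ≤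
          (ρ k).trace.re +
            ∑ m ∈ (Finset.range M).erase k, (matPosPart (ρ m - ρ k)).trace.re := by
      intro k hk
      have hkM := Finset.mem_range.mp hk
      set ρ' : ℕ → Matrix (Fin n) (Fin n) ℂ := fun m => ρ (Equiv.swap 0 k m) with hρ'
      have hswap : ∀ x : ℕ, Equiv.swap 0 k x = if x = 0 then k else if x = k then 0 else x := by
        intro x; rw [Equiv.swap_apply_def]
      have hH' : ∀ m < M, (ρ' m).IsHermitian := by
        intro m hm
        apply hH
        rw [hswap m]
        split_ifs <;> omega
      have h0' : ρ' 0 = ρ k := by simp [hρ']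
      calc (Xseq ρ' (M - 1)).trace.re
          = (ρ' 0).trace.re
            + ∑ m ∈ Finset.range (M - 1), (matPosPart (ρ' (m + 1) - Xseq ρ' m)).trace.re :=
            trace_Xseq ρ' (M - 1)
        _ ≤ (ρ' 0).trace.re
            + ∑ m ∈ Finset.range (M - 1), (matPosPart (ρ' (m + 1) - ρ' 0)).trace.re :=
            add_le_add_right (core ρ' hH') _
        _ = (ρ k).trace.re
            + ∑ m ∈ (Finset.range M).erase k, (matPosPart (ρ m - ρ k)).trace.re := by
            rw [h0']
            congr 1
            refine Finset.sum_nbij' (fun m => Equiv.swap 0 k (m + 1))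
              (fun m => Equiv.swap 0 k m - 1) ?_ ?_ ?_ ?_ ?_
            · intro a ha
              have haM := Finset.mem_range.mp ha
              have h1 : Equiv.swap 0 k (a + 1) = if a + 1 = k then 0 else a + 1 := by
                rw [hswap]; simp
              rw [Finset.mem_erase, Finset.mem_range, h1]
              split_ifs with h2 <;> constructor <;> omega
            · intro a ha
              rw [Finset.mem_erase, Finset.mem_range] at ha
              obtain ⟨ha1, ha2⟩ := ha
              rw [Finset.mem_range, hswap a]
              split_ifs <;> omega
            · intro a _
              rw [Equiv.swap_apply_self]
              omega
            · intro a ha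
              rw [Finset.mem_erase, Finset.mem_range] at ha
              have hne : Equiv.swap 0 k a ≠ 0 := by
                rw [hswap a]; split_ifs <;> omega
              have he : Equiv.swap 0 k a - 1 + 1 = Equiv.swap 0 k a := by omega
              rw [he, Equiv.swap_apply_self]
            · intro a _
              simp only [hρ', Equiv.swap_apply_left]
        _ = _ := rfl
    obtain ⟨k, hk, hgk⟩ := Finset.exists_mem_eq_inf' (Finset.nonempty_range_iff.mpr hM.ne')
      (fun k => (ρ k).trace.re +
        ∑ m ∈ (Finset.range M).erase k, (matPosPart (ρ m - ρ k)).trace.re)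
    calc (Finset.range M).inf' (Finset.nonempty_range_iff.mpr hM.ne')
          (fun k => (Xseq (fun m => ρ (Equiv.swap 0 k m)) (M - 1)).trace.re)
        ≤ (Xseq (fun m => ρ (Equiv.swap 0 k m)) (M - 1)).trace.re := Finset.inf'_le _ hk
      _ ≤ (ρ k).trace.re
          + ∑ m ∈ (Finset.range M).erase k, (matPosPart (ρ m - ρ k)).trace.re := key k hk
      _ = _ := hgk.symm
  · exact add_le_add_right (core ρ hH) _
end

section
/- Let E_1,…,E_{M-1} be operators on a finite-dimensional complex Hilbert space with 0 ≤ E_k ≤ 1 for all k. Define A_m = E_{m+1}^{1/2} E_{m+2}^{1/2} ⋯ E_{M-1}^{1/2} for 0 ≤ m < M−1 and A_{M-1} = 1, and set Π_0 = |A_0|² and Π_m = |A_m|² − |A_{m-1}|² for 1 ≤ m ≤ M−1, where |A|² = A†A. Then {Π_m}_{m=0}^{M-1} is a POVM: each Π_m is positive semidefinite (indeed Π_m = A_m†(1 − E_m)A_m for 1 ≤ m ≤ M−1) and Σ_{m=0}^{M-1} Π_m = 1. -/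
open Matrix
open scoped ComplexOrder

open scoped Classical in
/-- Positive semidefinite square root (junk value `0` on non-PSD input). -/
noncomputable def matSqrt {n : ℕ} (A : Matrix (Fin n) (Fin n) ℂ) : Matrix (Fin n) (Fin n) ℂ :=
  if hA : A.PosSemidef then
    (hA.1.eigenvectorUnitary : Matrix (Fin n) (Fin n) ℂ) *
      Matrix.diagonal (fun i => ((Real.sqrt (hA.1.eigenvalues i) : ℝ) : ℂ)) *
      star (hA.1.eigenvectorUnitary : Matrix (Fin n) (Fin n) ℂ)
  else 0

/-- `A_m = E_{m+1}^{1/2} E_{m+2}^{1/2} ⋯ E_{M-1}^{1/2}` (in particular `A_{M-1} = 1`). -/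
noncomputable def Aseq {n : ℕ} (M : ℕ) (E : ℕ → Matrix (Fin n) (Fin n) ℂ) (m : ℕ) :
    Matrix (Fin n) (Fin n) ℂ :=
  ((List.range (M - 1 - m)).map (fun j => matSqrt (E (m + 1 + j)))).prod

lemma Aseq_step {n M : ℕ} (E : ℕ → Matrix (Fin n) (Fin n) ℂ) (i : ℕ)
    (hm2 : i + 1 ≤ M - 1) : Aseq M E i = matSqrt (E (i + 1)) * Aseq M E (i + 1) := by
  unfold Aseq
  have h1 : M - 1 - i = (M - 1 - (i + 1)) + 1 := by omega
  rw [h1, List.range_succ_eq_map]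
  simp only [List.map_cons, List.prod_cons, List.map_map, add_zero]
  congr 1
  congr 1
  apply List.map_congr_left
  intro j _
  simp only [Function.comp_apply]
  have h : i + 1 + Nat.succ j = i + 1 + 1 + j := by omega
  rw [h]

lemma Aseq_last {n M : ℕ} (E : ℕ → Matrix (Fin n) (Fin n) ℂ) :
    Aseq M E (M - 1) = 1 := by
  unfold Aseq
  simp

/-- Given operators `E_1, …, E_{M-1}` with `0 ≤ E_k ≤ 1`, the operators
`Π₀ = |A₀|²`, `Π_m = |A_m|² − |A_{m-1}|²` (with `|A|² = A†A`) form a POVM: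
`Π_m = A_m†(1 − E_m)A_m` for `1 ≤ m ≤ M−1`, each `Π_m` is PSD, and they sum to `1`. -/
theorem stmt_7 {n M : ℕ} (hM : 0 < M) (E : ℕ → Matrix (Fin n) (Fin n) ℂ)
    (hE : ∀ k, 1 ≤ k → k ≤ M - 1 →
      (E k).PosSemidef ∧ ((1 : Matrix (Fin n) (Fin n) ℂ) - E k).PosSemidef) :
    (∀ m, 1 ≤ m → m ≤ M - 1 →
        (Aseq M E m)ᴴ * Aseq M E m - (Aseq M E (m - 1))ᴴ * Aseq M E (m - 1) =
          (Aseq M E m)ᴴ * (1 - E m) * Aseq M E m) ∧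
    ((Aseq M E 0)ᴴ * Aseq M E 0).PosSemidef ∧
    (∀ m, 1 ≤ m → m ≤ M - 1 →
        ((Aseq M E m)ᴴ * Aseq M E m - (Aseq M E (m - 1))ᴴ * Aseq M E (m - 1)).PosSemidef) ∧
    (Aseq M E 0)ᴴ * Aseq M E 0 + ∑ m ∈ Finset.Icc 1 (M - 1),
        ((Aseq M E m)ᴴ * Aseq M E m - (Aseq M E (m - 1))ᴴ * Aseq M E (m - 1)) = 1 := by
  have key : ∀ m, 1 ≤ m → m ≤ M - 1 →
      (Aseq M E m)ᴴ * Aseq M E m - (Aseq M E (m - 1))ᴴ * Aseq M E (m - 1) =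
        (Aseq M E m)ᴴ * (1 - E m) * Aseq M E m := by
    intro m hm1 hm2
    have hEm := (hE m hm1 hm2).1
    have hherm : (matSqrt (E m))ᴴ = matSqrt (E m) := by
      simp only [matSqrt, dif_pos hEm, Matrix.conjTranspose_mul, Matrix.star_eq_conjTranspose,
        Matrix.conjTranspose_conjTranspose, Matrix.diagonal_conjTranspose, Matrix.mul_assoc]
      congr 2
      ext i j
      simp [Matrix.diagonal_apply]
    have hsq : matSqrt (E m) * matSqrt (E m) = E m := by
      have hU := Unitary.coe_star_mul_self hEm.1.eigenvectorUnitary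
      have hspec := hEm.1.spectral_theorem
      rw [Unitary.conjStarAlgAut_apply] at hspec
      conv_rhs => rw [hspec]
      simp only [matSqrt, dif_pos hEm]
      have hd : Matrix.diagonal (fun i => ((Real.sqrt (hEm.1.eigenvalues i) : ℝ) : ℂ)) *
          Matrix.diagonal (fun i => ((Real.sqrt (hEm.1.eigenvalues i) : ℝ) : ℂ)) =
          Matrix.diagonal (RCLike.ofReal ∘ hEm.1.eigenvalues) := by
        rw [Matrix.diagonal_mul_diagonal]
        congr 1
        funext i
        simp only [Function.comp_apply, ← Complex.ofReal_mul]
        rw [Real.mul_self_sqrt (hEm.eigenvalues_nonneg i)]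
        rfl
      calc _ = (hEm.1.eigenvectorUnitary : Matrix (Fin n) (Fin n) ℂ) *
            (Matrix.diagonal (fun i => ((Real.sqrt (hEm.1.eigenvalues i) : ℝ) : ℂ)) *
            ((star (hEm.1.eigenvectorUnitary : Matrix (Fin n) (Fin n) ℂ)) *
              (hEm.1.eigenvectorUnitary : Matrix (Fin n) (Fin n) ℂ)) *
            Matrix.diagonal (fun i => ((Real.sqrt (hEm.1.eigenvalues i) : ℝ) : ℂ))) *
            star (hEm.1.eigenvectorUnitary : Matrix (Fin n) (Fin n) ℂ) := by
            simp only [Matrix.mul_assoc]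
        _ = _ := by rw [hU, Matrix.mul_one, hd]
    have hstep : Aseq M E (m - 1) = matSqrt (E m) * Aseq M E m := by
      have := Aseq_step (M := M) E (m - 1) (by omega)
      rwa [show m - 1 + 1 = m by omega] at this
    rw [hstep, Matrix.conjTranspose_mul,
      hherm]
    have h2 : matSqrt (E m) * (matSqrt (E m) * Aseq M E m) = E m * Aseq M E m := by
      rw [← Matrix.mul_assoc, hsq]
    rw [Matrix.mul_assoc, h2]
    noncomm_ring
  refine ⟨key, Matrix.posSemidef_conjTranspose_mul_self _, ?_, ?_⟩
  · intro m hm1 hm2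
    rw [key m hm1 hm2]
    exact (hE m hm1 hm2).2.conjTranspose_mul_mul_same _
  · have hIcc : Finset.Icc 1 (M - 1) = Finset.Ico 1 M := by
      ext x
      simp only [Finset.mem_Icc, Finset.mem_Ico]
      omega
    rw [hIcc, Finset.sum_Ico_eq_sum_range]
    have : ∀ i ∈ Finset.range (M - 1),
        (Aseq M E (1 + i))ᴴ * Aseq M E (1 + i) - (Aseq M E (1 + i - 1))ᴴ * Aseq M E (1 + i - 1)
        = (Aseq M E (i + 1))ᴴ * Aseq M E (i + 1) - (Aseq M E i)ᴴ * Aseq M E i := by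
      intro i _
      rw [show (1 : ℕ) + i = i + 1 by omega, Nat.add_sub_cancel]
    rw [Finset.sum_congr rfl this, Finset.sum_range_sub
      (fun i => (Aseq M E i)ᴴ * Aseq M E i), Aseq_last E]
    simp
end

section
/- Let A and B be Hermitian operators on a finite-dimensional complex Hilbert space with A ≥ B. Then Tr(A_+) ≥ Tr(B_+), and equality holds if and only if A_+ = B_+. -/
open Matrix
open scoped ComplexOrder

open Matrix
open scoped ComplexOrder

namespace Stmt15Aux

variable {n : ℕ}

lemma trace_nonneg {X : Matrix (Fin n) (Fin n) ℂ} (hX : X.PosSemidef) : 0 ≤ X.trace := by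
  unfold Matrix.trace
  refine Finset.sum_nonneg fun i _ => ?_
  have := hX.dotProduct_mulVec_nonneg (Pi.single i 1)
  simpa [dotProduct, Matrix.mulVec, Pi.single_apply, Finset.sum_ite_eq,
    Matrix.diag] using this

lemma eq_zero_of_trace_eq_zero {X : Matrix (Fin n) (Fin n) ℂ} (hX : X.PosSemidef)
    (h : X.trace = 0) : X = 0 := by
  have hdiag : ∀ i, X.diag i = 0 := by
    intro i
    have h0 : ∀ j, 0 ≤ X.diag j := fun j => by
      have := hX.dotProduct_mulVec_nonneg (Pi.single j 1)
      simpa [dotProduct, Matrix.mulVec, Pi.single_apply, Matrix.diag] using this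
    exact (Finset.sum_eq_zero_iff_of_nonneg (fun j _ => h0 j)).mp h i (Finset.mem_univ i)
  ext i j
  have hcol : X *ᵥ Pi.single j 1 = 0 := by
    refine (hX.dotProduct_mulVec_zero_iff (Pi.single j 1)).mp ?_
    have := hdiag j
    simpa [dotProduct, Matrix.mulVec, Pi.single_apply, Matrix.diag] using this
  have := congrFun hcol i
  simpa [Matrix.mulVec, dotProduct, Pi.single_apply] using this

lemma trace_mul_nonneg {X Y : Matrix (Fin n) (Fin n) ℂ} (hX : X.PosSemidef)
    (hY : Y.PosSemidef) : 0 ≤ (X * Y).trace := by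
  obtain ⟨C, rfl⟩ := (by open scoped MatrixOrder in exact CStarAlgebra.nonneg_iff_eq_star_mul_self.mp hY.nonneg :
    ∃ C : Matrix (Fin n) (Fin n) ℂ, Y = Cᴴ * C)
  have h1 : (X * (Cᴴ * C)).trace = (C * X * Cᴴ).trace := by
    rw [← Matrix.mul_assoc, Matrix.trace_mul_cycle]
  rw [h1]
  exact trace_nonneg (hX.mul_mul_conjTranspose_same C)

lemma mul_eq_zero_of_trace_eq_zero {X Y : Matrix (Fin n) (Fin n) ℂ} (hX : X.PosSemidef)
    (hY : Y.PosSemidef) (h : (X * Y).trace = 0) : X * Y = 0 := by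
  obtain ⟨C, rfl⟩ := (by open scoped MatrixOrder in exact CStarAlgebra.nonneg_iff_eq_star_mul_self.mp hY.nonneg :
    ∃ C : Matrix (Fin n) (Fin n) ℂ, Y = Cᴴ * C)
  obtain ⟨D, rfl⟩ := (by open scoped MatrixOrder in exact CStarAlgebra.nonneg_iff_eq_star_mul_self.mp hX.nonneg :
    ∃ D : Matrix (Fin n) (Fin n) ℂ, X = Dᴴ * D)
  have h1 : (Dᴴ * D * (Cᴴ * C)).trace = (C * (Dᴴ * D) * Cᴴ).trace := by
    rw [← Matrix.mul_assoc, Matrix.trace_mul_cycle]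
  have h2 : C * (Dᴴ * D) * Cᴴ = (D * Cᴴ)ᴴ * (D * Cᴴ) := by
    simp only [Matrix.conjTranspose_mul, Matrix.conjTranspose_conjTranspose]
    noncomm_ring
  have h3 : (D * Cᴴ)ᴴ * (D * Cᴴ) = 0 := by
    refine eq_zero_of_trace_eq_zero (Matrix.posSemidef_conjTranspose_mul_self _) ?_
    rw [← h2, ← h1, h]
  have h4 : D * Cᴴ = 0 := Matrix.conjTranspose_mul_self_eq_zero.mp h3
  calc Dᴴ * D * (Cᴴ * C) = Dᴴ * (D * Cᴴ) * C := by noncomm_ring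
    _ = 0 := by rw [h4]; simp

lemma conj_posSemidef (U : Matrix (Fin n) (Fin n) ℂ) {f : Fin n → ℂ} (hf : ∀ i, 0 ≤ f i) :
    (U * Matrix.diagonal f * star U).PosSemidef := by
  rw [Matrix.star_eq_conjTranspose]
  exact (Matrix.PosSemidef.diagonal hf).mul_mul_conjTranspose_same U

lemma conj_mul {U : Matrix (Fin n) (Fin n) ℂ} (hU : star U * U = 1) (f g : Fin n → ℂ) :
    (U * Matrix.diagonal f * star U) * (U * Matrix.diagonal g * star U) =
      U * Matrix.diagonal (fun i => f i * g i) * star U := by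
  have : Matrix.diagonal (fun i => f i * g i) = Matrix.diagonal f * Matrix.diagonal g := by
    rw [Matrix.diagonal_mul_diagonal]
  rw [this]
  calc (U * Matrix.diagonal f * star U) * (U * Matrix.diagonal g * star U)
      = U * Matrix.diagonal f * (star U * U) * (Matrix.diagonal g * star U) := by noncomm_ring
    _ = U * (Matrix.diagonal f * Matrix.diagonal g) * star U := by rw [hU]; noncomm_ring

lemma conj_sub (U : Matrix (Fin n) (Fin n) ℂ) (f g : Fin n → ℂ) :
    (U * Matrix.diagonal f * star U) - (U * Matrix.diagonal g * star U) =
      U * Matrix.diagonal (fun i => f i - g i) * star U := by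
  have : Matrix.diagonal (fun i => f i - g i) = Matrix.diagonal f - Matrix.diagonal g := by
    rw [Matrix.diagonal_sub]
  rw [this]
  noncomm_ring

lemma conj_trace {U : Matrix (Fin n) (Fin n) ℂ} (hU : star U * U = 1) (f : Fin n → ℂ) :
    (U * Matrix.diagonal f * star U).trace = ∑ i, f i := by
  rw [Matrix.trace_mul_cycle, hU, Matrix.one_mul, Matrix.trace_diagonal]

lemma conj_one {U : Matrix (Fin n) (Fin n) ℂ} (hU : U * star U = 1) :
    U * Matrix.diagonal (fun _ : Fin n => (1 : ℂ)) * star U = 1 := by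
  rw [Matrix.diagonal_one, Matrix.mul_one, hU]

end Stmt15Aux

open Stmt15Aux

/-- For Hermitian `A ≥ B`, `Tr(A₊) ≥ Tr(B₊)`, with equality iff `A₊ = B₊`. -/
theorem stmt_15 {n : ℕ} (A B : Matrix (Fin n) (Fin n) ℂ)
    (hA : A.IsHermitian) (hB : B.IsHermitian) (hAB : (A - B).PosSemidef) :
    (matPosPart B).trace.re ≤ (matPosPart A).trace.re ∧
    ((matPosPart A).trace.re = (matPosPart B).trace.re ↔ matPosPart A = matPosPart B) := by
  set UA : Matrix (Fin n) (Fin n) ℂ := (hA.eigenvectorUnitary : Matrix (Fin n) (Fin n) ℂ) with hUA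
  set UB : Matrix (Fin n) (Fin n) ℂ := (hB.eigenvectorUnitary : Matrix (Fin n) (Fin n) ℂ) with hUB
  have hUA1 : UA * star UA = 1 := (Matrix.mem_unitaryGroup_iff).mp hA.eigenvectorUnitary.2
  have hUB1 : UB * star UB = 1 := (Matrix.mem_unitaryGroup_iff).mp hB.eigenvectorUnitary.2
  have hUB2 : star UB * UB = 1 := (Matrix.mem_unitaryGroup_iff').mp hB.eigenvectorUnitary.2
  set fA : Fin n → ℂ := fun i => if 0 < hA.eigenvalues i then (hA.eigenvalues i : ℂ) else 0
    with hfA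
  set fB : Fin n → ℂ := fun i => if 0 < hB.eigenvalues i then (hB.eigenvalues i : ℂ) else 0
    with hfB
  set eB : Fin n → ℂ := fun i => if 0 < hB.eigenvalues i then (1 : ℂ) else 0 with heB
  have hPosA : matPosPart A = UA * Matrix.diagonal fA * star UA := by
    rw [matPosPart, dif_pos hA]
  have hPosB : matPosPart B = UB * Matrix.diagonal fB * star UB := by
    rw [matPosPart, dif_pos hB]
  have hPdef : matProjPos B = UB * Matrix.diagonal eB * star UB := by
    rw [matProjPos, dif_pos hB]
  have hfA_nonneg : ∀ i, 0 ≤ fA i := fun i => by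
    rw [hfA]; dsimp only; split
    · exact Complex.zero_le_real.mpr (le_of_lt (by assumption))
    · exact le_refl 0
  have heB_nonneg : ∀ i, 0 ≤ eB i := fun i => by
    rw [heB]; dsimp only; split
    · exact zero_le_one
    · exact le_refl 0
  have hApos : (matPosPart A).PosSemidef := hPosA ▸ conj_posSemidef UA hfA_nonneg
  have hPpos : (matProjPos B).PosSemidef := hPdef ▸ conj_posSemidef UB heB_nonneg
  have h1P : (1 - matProjPos B) = UB * Matrix.diagonal (fun i => 1 - eB i) * star UB := by
    rw [hPdef, ← conj_sub, conj_one hUB1]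
  have h1Ppos : (1 - matProjPos B).PosSemidef := by
    rw [h1P]
    refine conj_posSemidef UB fun i => ?_
    rw [heB]; dsimp only; split <;> simp
  have hAspec : A = UA * Matrix.diagonal (fun i => (hA.eigenvalues i : ℂ)) * star UA := by
    have := hA.spectral_theorem
    simpa [Function.comp_def] using this
  have hAposA : (matPosPart A - A).PosSemidef := by
    rw [hPosA]
    rw [hAspec]
    rw [conj_sub]
    refine conj_posSemidef UA fun i => ?_
    rw [hfA]; dsimp only; split
    · simp
    · rename_i hneg
      rw [zero_sub, ← Complex.ofReal_neg]
      exact Complex.zero_le_real.mpr (by linarith [not_lt.mp hneg])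
  have hBspec : B = UB * Matrix.diagonal (fun i => (hB.eigenvalues i : ℂ)) * star UB := by
    have := hB.spectral_theorem
    simpa [Function.comp_def] using this
  have hBP : B * matProjPos B = matPosPart B := by
    rw [hPdef, hPosB]
    rw [hBspec]
    rw [conj_mul hUB2]
    have hfun : (fun i => (hB.eigenvalues i : ℂ) * eB i) = fB := by
      funext i
      rw [heB, hfB]; dsimp only; split <;> simp
    rw [hfun]
  set t1 : ℂ := ((A - B) * matProjPos B).trace with ht1
  set t2 : ℂ := ((matPosPart A - A) * matProjPos B).trace with ht2
  set t3 : ℂ := ((matPosPart A) * (1 - matProjPos B)).trace with ht3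
  have ht1n : 0 ≤ t1 := trace_mul_nonneg hAB hPpos
  have ht2n : 0 ≤ t2 := trace_mul_nonneg hAposA hPpos
  have ht3n : 0 ≤ t3 := trace_mul_nonneg hApos h1Ppos
  have hkey : (matPosPart A).trace - (matPosPart B).trace = t1 + t2 + t3 := by
    rw [ht1, ht2, ht3, ← Matrix.trace_add, ← Matrix.trace_add, ← Matrix.trace_sub]
    congr 1
    rw [← hBP]
    noncomm_ring
  have hdn : 0 ≤ (matPosPart A).trace - (matPosPart B).trace := by
    rw [hkey]
    exact add_nonneg (add_nonneg ht1n ht2n) ht3n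
  obtain ⟨hre, him⟩ := Complex.le_def.mp hdn
  simp only [Complex.zero_re, Complex.zero_im, Complex.sub_re, Complex.sub_im] at hre him
  refine ⟨by linarith, ?_, fun heq => by rw [heq]⟩
  intro heq
  have hd0 : (matPosPart A).trace - (matPosPart B).trace = 0 := by
    apply Complex.ext
    · simp only [Complex.sub_re, Complex.zero_re]; linarith
    · simp only [Complex.sub_im, Complex.zero_im]; linarith
  have hsum : t1 + t2 + t3 = 0 := by rw [← hkey, hd0]
  have h12 : t1 + t2 = 0 ∧ t3 = 0 :=
    (add_eq_zero_iff_of_nonneg (add_nonneg ht1n ht2n) ht3n).mp hsum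
  have h1 : t1 = 0 ∧ t2 = 0 := (add_eq_zero_iff_of_nonneg ht1n ht2n).mp h12.1
  have m1 : (A - B) * matProjPos B = 0 := mul_eq_zero_of_trace_eq_zero hAB hPpos h1.1
  have m2 : (matPosPart A - A) * matProjPos B = 0 :=
    mul_eq_zero_of_trace_eq_zero hAposA hPpos h1.2
  have m3 : (matPosPart A) * (1 - matProjPos B) = 0 :=
    mul_eq_zero_of_trace_eq_zero hApos h1Ppos h12.2
  have e3 : matPosPart A = matPosPart A * matProjPos B := by
    rw [Matrix.mul_sub, Matrix.mul_one, sub_eq_zero] at m3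
    exact m3
  have e2 : matPosPart A * matProjPos B = A * matProjPos B := by
    rw [Matrix.sub_mul, sub_eq_zero] at m2
    exact m2
  have e1 : A * matProjPos B = B * matProjPos B := by
    rw [Matrix.sub_mul, sub_eq_zero] at m1
    exact m1
  rw [e3, e2, e1, hBP]
end

section
/- For any Hermitian operators A and B on a finite-dimensional complex Hilbert space, Tr(A_+) + Tr(B_+) ≥ Tr((A + B)_+). -/
open Matrix
open scoped ComplexOrder

lemma aux_conj_psd {n : ℕ} (U : Matrix (Fin n) (Fin n) ℂ) (d : Fin n → ℂ)
    (hd : ∀ i, 0 ≤ d i) : (U * diagonal d * star U).PosSemidef := by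
  have := (posSemidef_diagonal_iff.mpr hd).mul_mul_conjTranspose_same U
  simpa [star_eq_conjTranspose, mul_assoc] using this

lemma aux_one_sub_conj {n : ℕ} (U : Matrix (Fin n) (Fin n) ℂ) (hU : U * star U = 1)
    (d : Fin n → ℂ) :
    (1 : Matrix (Fin n) (Fin n) ℂ) - U * diagonal d * star U
      = U * diagonal (fun i => 1 - d i) * star U := by
  have : diagonal (fun i => (1:ℂ) - d i) = 1 - diagonal d := by
    rw [← diagonal_one, ← diagonal_sub]
  rw [this, mul_sub, sub_mul, mul_one, hU]

lemma aux_key {n : ℕ} (U : Matrix (Fin n) (Fin n) ℂ) (hU : U * star U = 1)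
    (hU' : star U * U = 1) (d : Fin n → ℝ) (P : Matrix (Fin n) (Fin n) ℂ)
    (hP : P.PosSemidef) (hP1 : ((1 : Matrix (Fin n) (Fin n) ℂ) - P).PosSemidef) :
    ((U * diagonal (fun i => (d i : ℂ)) * star U) * P).trace.re
      ≤ (∑ i, if 0 < d i then (d i : ℂ) else 0).re := by
  set Q := star U * P * U with hQ
  have hQpsd : Q.PosSemidef := by
    have := hP.conjTranspose_mul_mul_same U
    simpa [star_eq_conjTranspose, hQ] using this
  have hQ1 : ((1 : Matrix (Fin n) (Fin n) ℂ) - Q).PosSemidef := by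
    have := hP1.conjTranspose_mul_mul_same U
    have h2 : Uᴴ * (1 - P) * U = 1 - Q := by
      rw [← star_eq_conjTranspose, mul_sub, sub_mul, mul_one, hU', hQ]
    rwa [h2] at this
  have hdiag : ∀ i, 0 ≤ (Q i i).re ∧ (Q i i).re ≤ 1 ∧ (Q i i).im = 0 := by
    intro i
    have h1 : 0 ≤ Q i i := by
      have := hQpsd.dotProduct_mulVec_nonneg (Pi.single i 1)
      simpa [dotProduct, mulVec, Pi.single_apply] using this
    have h2 : 0 ≤ 1 - Q i i := by
      have := hQ1.dotProduct_mulVec_nonneg (Pi.single i 1)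
      simpa [dotProduct, mulVec, Pi.single_apply, Matrix.sub_apply, one_apply] using this
    rw [Complex.le_def] at h1 h2
    simp only [Complex.zero_re, Complex.zero_im, Complex.sub_re, Complex.sub_im,
      Complex.one_re, Complex.one_im] at h1 h2
    exact ⟨h1.1, by linarith [h2.1], h1.2.symm⟩
  have htr : ((U * diagonal (fun i => (d i : ℂ)) * star U) * P).trace
      = ∑ i, (d i : ℂ) * Q i i := by
    rw [show (U * diagonal (fun i => (d i : ℂ)) * star U) * P
        = U * (diagonal (fun i => (d i : ℂ)) * star U * P) from by noncomm_ring,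
      trace_mul_comm,
      show diagonal (fun i => (d i : ℂ)) * star U * P * U
        = diagonal (fun i => (d i : ℂ)) * Q from by rw [hQ]; noncomm_ring]
    simp [trace, diagonal_mul, diag]
  rw [htr, Complex.re_sum, Complex.re_sum]
  apply Finset.sum_le_sum
  intro i _
  obtain ⟨h0, h1, him⟩ := hdiag i
  have hre : ((d i : ℂ) * Q i i).re = d i * (Q i i).re := by
    simp [Complex.mul_re, him]
  rw [hre]
  split_ifs with h
  · calc d i * (Q i i).re ≤ d i * 1 := mul_le_mul_of_nonneg_left h1 h.le
      _ = ((d i : ℂ)).re := by simp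
  · push_neg at h
    have : d i * (Q i i).re ≤ 0 := mul_nonpos_of_nonpos_of_nonneg h h0
    simpa using this

lemma aux_trace_posPart {n : ℕ} (A : Matrix (Fin n) (Fin n) ℂ) (hA : A.IsHermitian) :
    (matPosPart A).trace = ∑ i, if 0 < hA.eigenvalues i then (hA.eigenvalues i : ℂ) else 0 := by
  rw [matPosPart, dif_pos hA, trace_mul_cycle,
    UnitaryGroup.star_mul_self hA.eigenvectorUnitary, one_mul, trace_diagonal]

lemma aux_trace_eq {n : ℕ} (U : Matrix (Fin n) (Fin n) ℂ) (hU' : star U * U = 1)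
    (d : Fin n → ℝ) :
    ((U * diagonal (fun i => (d i : ℂ)) * star U) *
      (U * diagonal (fun i => if 0 < d i then (1:ℂ) else 0) * star U)).trace
      = ∑ i, if 0 < d i then (d i : ℂ) else 0 := by
  have h1 : (U * diagonal (fun i => (d i : ℂ)) * star U) *
      (U * diagonal (fun i => if 0 < d i then (1:ℂ) else 0) * star U)
      = U * (diagonal (fun i => (d i : ℂ)) *
          diagonal (fun i => if 0 < d i then (1:ℂ) else 0)) * star U := by
    rw [show (U * diagonal (fun i => (d i : ℂ)) * star U) *
        (U * diagonal (fun i => if 0 < d i then (1:ℂ) else 0) * star U)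
        = U * diagonal (fun i => (d i : ℂ)) * (star U * U) *
          diagonal (fun i => if 0 < d i then (1:ℂ) else 0) * star U from by noncomm_ring,
      hU', mul_one, mul_assoc, mul_assoc, mul_assoc]
    noncomm_ring
  rw [h1, diagonal_mul_diagonal, trace_mul_cycle, hU', one_mul, trace_diagonal]
  congr 1
  funext i
  split <;> simp

/-- For Hermitian `A`, `B`, `Tr(A₊) + Tr(B₊) ≥ Tr((A + B)₊)`. -/
theorem stmt_16 {n : ℕ} (A B : Matrix (Fin n) (Fin n) ℂ)
    (hA : A.IsHermitian) (hB : B.IsHermitian) :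
    (matPosPart (A + B)).trace.re ≤ (matPosPart A).trace.re + (matPosPart B).trace.re := by
  have hC : (A + B).IsHermitian := hA.add hB
  set UC := (hC.eigenvectorUnitary : Matrix (Fin n) (Fin n) ℂ) with hUCdef
  have hUC : UC * star UC = 1 := mem_unitaryGroup_iff.mp hC.eigenvectorUnitary.2
  have hUC' : star UC * UC = 1 := mem_unitaryGroup_iff'.mp hC.eigenvectorUnitary.2
  set P := matProjPos (A + B) with hPdef
  have hPform : P = UC * diagonal (fun i => if 0 < hC.eigenvalues i then (1:ℂ) else 0) * star UC := by
    rw [hPdef, matProjPos, dif_pos hC]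
  have hPpsd : P.PosSemidef := by
    rw [hPform]; exact aux_conj_psd _ _ (fun i => by split <;> norm_num)
  have hP1 : ((1 : Matrix (Fin n) (Fin n) ℂ) - P).PosSemidef := by
    rw [hPform, aux_one_sub_conj _ hUC]
    exact aux_conj_psd _ _ (fun i => by split <;> norm_num)
  have hCoe : (RCLike.ofReal ∘ hC.eigenvalues : Fin n → ℂ) = fun i => (hC.eigenvalues i : ℂ) := rfl
  have htr : (matPosPart (A + B)).trace = ((A + B) * P).trace := by
    rw [aux_trace_posPart _ hC]
    conv_rhs => rw [hC.spectral_theorem]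
    rw [Unitary.conjStarAlgAut_apply, hCoe, ← hUCdef, hPform, aux_trace_eq UC hUC' hC.eigenvalues]
  have hsplit : ((A + B) * P).trace = (A * P).trace + (B * P).trace := by
    rw [add_mul, trace_add]
  have hboundA : (A * P).trace.re ≤ (matPosPart A).trace.re := by
    rw [aux_trace_posPart A hA]
    calc (A * P).trace.re
        = (((hA.eigenvectorUnitary : Matrix (Fin n) (Fin n) ℂ) *
            diagonal (fun i => (hA.eigenvalues i : ℂ)) *
            star (hA.eigenvectorUnitary : Matrix (Fin n) (Fin n) ℂ)) * P).trace.re := by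
          conv_lhs => rw [hA.spectral_theorem]
          rfl
      _ ≤ _ := aux_key _ (mem_unitaryGroup_iff.mp hA.eigenvectorUnitary.2)
          (mem_unitaryGroup_iff'.mp hA.eigenvectorUnitary.2) _ P hPpsd hP1
  have hboundB : (B * P).trace.re ≤ (matPosPart B).trace.re := by
    rw [aux_trace_posPart B hB]
    calc (B * P).trace.re
        = (((hB.eigenvectorUnitary : Matrix (Fin n) (Fin n) ℂ) *
            diagonal (fun i => (hB.eigenvalues i : ℂ)) *
            star (hB.eigenvectorUnitary : Matrix (Fin n) (Fin n) ℂ)) * P).trace.re := by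
          conv_lhs => rw [hB.spectral_theorem]
          rfl
      _ ≤ _ := aux_key _ (mem_unitaryGroup_iff.mp hB.eigenvectorUnitary.2)
          (mem_unitaryGroup_iff'.mp hB.eigenvectorUnitary.2) _ P hPpsd hP1
  rw [htr, hsplit, Complex.add_re]
  exact add_le_add hboundA hboundB
end

section
/- Let A be any operator and ρ, X, E positive semidefinite operators on a finite-dimensional complex Hilbert space with 0 ≤ E ≤ 1. Then Tr(A [X + (ρ − X)_+] A†) ≥ Tr(A ρ A† (1 − E) + A X A† E), and equality holds if and only if both A (X − ρ)_+ A† = (A (X − ρ) A†)_+ and P_≥(A (X − ρ) A†) ≥ E ≥ P_>(A (X − ρ) A†). -/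
open Matrix
open scoped ComplexOrder

variable {n : ℕ}

namespace Stmt18

noncomputable abbrev U {H : Matrix (Fin n) (Fin n) ℂ} (hH : H.IsHermitian) :
    Matrix (Fin n) (Fin n) ℂ := (hH.eigenvectorUnitary : Matrix (Fin n) (Fin n) ℂ)

lemma U_star_mul {H : Matrix (Fin n) (Fin n) ℂ} (hH : H.IsHermitian) :
    star (U hH) * U hH = 1 := Unitary.coe_star_mul_self _

lemma U_mul_star {H : Matrix (Fin n) (Fin n) ℂ} (hH : H.IsHermitian) :
    U hH * star (U hH) = 1 := Unitary.coe_mul_star_self _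

lemma cfc_def {H : Matrix (Fin n) (Fin n) ℂ} (hH : H.IsHermitian) (f : ℝ → ℝ) :
    hH.cfc f = U hH * diagonal (fun i => (f (hH.eigenvalues i) : ℂ)) * star (U hH) := rfl

lemma cfcMul {H : Matrix (Fin n) (Fin n) ℂ} (hH : H.IsHermitian) (f g : ℝ → ℝ) :
    hH.cfc f * hH.cfc g = hH.cfc (fun x => f x * g x) := by
  rw [cfc_def, cfc_def, cfc_def]
  simp only [mul_assoc]
  rw [show star (U hH) * (U hH * ((diagonal fun i => (g (hH.eigenvalues i) : ℂ)) * star (U hH)))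
      = (diagonal fun i => (g (hH.eigenvalues i) : ℂ)) * star (U hH) from by
    rw [← mul_assoc, U_star_mul, one_mul]]
  rw [← mul_assoc (diagonal _), diagonal_mul_diagonal]
  push_cast
  ring_nf

lemma cfcSub {H : Matrix (Fin n) (Fin n) ℂ} (hH : H.IsHermitian) (f g : ℝ → ℝ) :
    hH.cfc f - hH.cfc g = hH.cfc (fun x => f x - g x) := by
  rw [cfc_def, cfc_def, cfc_def, ← sub_mul, ← mul_sub, diagonal_sub]
  push_cast
  rfl

lemma cfcId {H : Matrix (Fin n) (Fin n) ℂ} (hH : H.IsHermitian) :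
    hH.cfc (fun x => x) = H := by
  conv_rhs => rw [hH.spectral_theorem]
  rfl

lemma cfcOne {H : Matrix (Fin n) (Fin n) ℂ} (hH : H.IsHermitian) :
    hH.cfc (fun _ => 1) = 1 := by
  rw [cfc_def]
  simp [diagonal_one, U_mul_star]

lemma cfcZero {H : Matrix (Fin n) (Fin n) ℂ} (hH : H.IsHermitian) :
    hH.cfc (fun _ => 0) = 0 := by
  rw [cfc_def]
  simp [diagonal_zero]

lemma cfcCongr {H : Matrix (Fin n) (Fin n) ℂ} (hH : H.IsHermitian) {f g : ℝ → ℝ}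
    (h : ∀ x, f x = g x) : hH.cfc f = hH.cfc g := by
  have : f = g := funext h
  rw [this]

lemma cfcPosSemidef {H : Matrix (Fin n) (Fin n) ℂ} (hH : H.IsHermitian) (f : ℝ → ℝ)
    (hf : ∀ x, 0 ≤ f x) : (hH.cfc f).PosSemidef := by
  rw [cfc_def]
  have hd : (diagonal (fun i => (f (hH.eigenvalues i) : ℂ))).PosSemidef := by
    refine PosSemidef.diagonal ?_
    intro i
    simpa using (by exact_mod_cast hf _ : (0:ℂ) ≤ (f (hH.eigenvalues i) : ℂ))
  simpa [star_eq_conjTranspose] using hd.mul_mul_conjTranspose_same (U hH)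

lemma cfcMulEqZero {H : Matrix (Fin n) (Fin n) ℂ} (hH : H.IsHermitian) {f g : ℝ → ℝ}
    (hfg : ∀ x, f x = 0 → g x = 0) {B : Matrix (Fin n) (Fin n) ℂ}
    (h : hH.cfc f * B = 0) : hH.cfc g * B = 0 := by
  have key : ∀ i j, (f (hH.eigenvalues i) : ℂ) * (star (U hH) * B) i j = 0 := by
    have h2 : (diagonal fun i => (f (hH.eigenvalues i) : ℂ)) * (star (U hH) * B) = 0 := by
      have := congrArg (fun M => star (U hH) * M) h
      simp only [cfc_def, mul_zero, mul_assoc] at this ⊢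
      rwa [← mul_assoc (star (U hH)) (U hH), U_star_mul, one_mul] at this
    intro i j
    have := congrFun (congrFun h2 i) j
    simpa [Matrix.mul_apply, diagonal, Finset.sum_ite_eq] using this
  have h3 : (diagonal fun i => (g (hH.eigenvalues i) : ℂ)) * (star (U hH) * B) = 0 := by
    ext i j
    have : (g (hH.eigenvalues i) : ℂ) * (star (U hH) * B) i j = 0 := by
      rcases eq_or_ne (f (hH.eigenvalues i)) 0 with hf | hf
      · rw [hfg _ hf]; simp
      · have : (star (U hH) * B) i j = 0 := by
          rcases mul_eq_zero.mp (key i j) with h' | h'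
          · exact absurd (Complex.ofReal_eq_zero.mp h') hf
          · exact h'
        rw [this, mul_zero]
    simpa [Matrix.mul_apply, diagonal, Finset.sum_ite_eq] using this
  calc hH.cfc g * B = U hH * ((diagonal fun i => (g (hH.eigenvalues i) : ℂ)) * (star (U hH) * B)) := by
        simp only [cfc_def, mul_assoc]
    _ = 0 := by rw [h3, mul_zero]

lemma trace_ctms_nonneg (B : Matrix (Fin n) (Fin n) ℂ) : 0 ≤ (Bᴴ * B).trace := by
  rw [Matrix.trace]
  refine Finset.sum_nonneg fun i _ => ?_
  rw [Matrix.diag_apply, Matrix.mul_apply]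
  refine Finset.sum_nonneg fun j _ => ?_
  simpa [Matrix.conjTranspose_apply] using star_mul_self_nonneg (B j i)

lemma trace_ctms_eq_zero {B : Matrix (Fin n) (Fin n) ℂ} (h : (Bᴴ * B).trace = 0) : B = 0 := by
  rw [Matrix.trace] at h
  have h1 : ∀ i ∈ Finset.univ, (0:ℂ) ≤ (Bᴴ * B).diag i := fun i _ => by
    rw [Matrix.diag_apply, Matrix.mul_apply]
    refine Finset.sum_nonneg fun j _ => ?_
    simpa [Matrix.conjTranspose_apply] using star_mul_self_nonneg (B j i)
  have h2 := (Finset.sum_eq_zero_iff_of_nonneg h1).mp h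
  ext j i
  have h3 := h2 i (Finset.mem_univ i)
  rw [Matrix.diag_apply, Matrix.mul_apply] at h3
  have h4 : ∀ k ∈ Finset.univ, (0:ℂ) ≤ Bᴴ i k * B k i := fun k _ => by
    simpa [Matrix.conjTranspose_apply] using star_mul_self_nonneg (B k i)
  have h5 := (Finset.sum_eq_zero_iff_of_nonneg h4).mp h3 j (Finset.mem_univ j)
  rw [Matrix.conjTranspose_apply] at h5
  have h6 : Complex.normSq (B j i) = 0 := by
    rw [Complex.star_def, ← Complex.normSq_eq_conj_mul_self] at h5
    exact_mod_cast h5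
  simp [Complex.normSq_eq_zero.mp h6]

open scoped MatrixOrder Matrix.Norms.L2Operator in
lemma posSemidef_iff_eq_transpose_mul_self {M : Matrix (Fin n) (Fin n) ℂ} :
    M.PosSemidef ↔ ∃ B : Matrix (Fin n) (Fin n) ℂ, M = Bᴴ * B := by
  constructor
  · intro h
    obtain ⟨B, hB⟩ := CStarAlgebra.nonneg_iff_eq_star_mul_self.mp h.nonneg
    exact ⟨B, hB⟩
  · rintro ⟨B, rfl⟩
    exact posSemidef_conjTranspose_mul_self B

lemma trace_psd_mul_nonneg {S T : Matrix (Fin n) (Fin n) ℂ}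
    (hS : S.PosSemidef) (hT : T.PosSemidef) :
    0 ≤ (S * T).trace ∧ ((S * T).trace = 0 ↔ S * T = 0) := by
  obtain ⟨B, rfl⟩ := posSemidef_iff_eq_transpose_mul_self.mp hS
  obtain ⟨C, rfl⟩ := posSemidef_iff_eq_transpose_mul_self.mp hT
  have key : (Bᴴ * B * (Cᴴ * C)).trace = ((C * Bᴴ)ᴴ * (C * Bᴴ)).trace := by
    rw [Matrix.conjTranspose_mul, Matrix.conjTranspose_conjTranspose]
    rw [show Bᴴ * B * (Cᴴ * C) = Bᴴ * (B * Cᴴ * C) by noncomm_ring,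
      Matrix.trace_mul_comm]
    noncomm_ring
  constructor
  · rw [key]; exact trace_ctms_nonneg _
  constructor
  · intro h
    rw [key] at h
    have h0 : C * Bᴴ = 0 := trace_ctms_eq_zero h
    have h1 : B * Cᴴ = 0 := by
      have := congrArg Matrix.conjTranspose h0
      simpa [Matrix.conjTranspose_mul] using this
    calc Bᴴ * B * (Cᴴ * C) = Bᴴ * (B * Cᴴ) * C := by noncomm_ring
      _ = 0 := by rw [h1, Matrix.mul_zero, Matrix.zero_mul]
  · intro h; rw [h, Matrix.trace_zero]

lemma psd_zero_of_neg {M : Matrix (Fin n) (Fin n) ℂ}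
    (hM : M.PosSemidef) (hM' : (-M).PosSemidef) : M = 0 := by
  obtain ⟨B, rfl⟩ := posSemidef_iff_eq_transpose_mul_self.mp hM
  obtain ⟨C, hC⟩ := posSemidef_iff_eq_transpose_mul_self.mp hM'
  have h2 : (0:ℂ) ≤ -((Bᴴ * B).trace) := by
    rw [← Matrix.trace_neg, hC]; exact trace_ctms_nonneg C
  rw [trace_ctms_eq_zero (B := B) (le_antisymm (neg_nonneg.mp h2) (trace_ctms_nonneg B))]
  simp

noncomputable def fp (x : ℝ) : ℝ := if 0 < x then x else 0
noncomputable def fm (x : ℝ) : ℝ := if x < 0 then -x else 0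
noncomputable def cp (x : ℝ) : ℝ := if 0 < x then 1 else 0
noncomputable def cnn (x : ℝ) : ℝ := if 0 ≤ x then 1 else 0
noncomputable def cle (x : ℝ) : ℝ := if x ≤ 0 then 1 else 0
noncomputable def clt (x : ℝ) : ℝ := if x < 0 then 1 else 0

lemma matPosPart_eq {H : Matrix (Fin n) (Fin n) ℂ} (hH : H.IsHermitian) :
    matPosPart H = hH.cfc fp := by
  rw [matPosPart, dif_pos hH, cfc_def]
  congr 1
  congr 1
  funext i
  simp [fp, apply_ite (fun x : ℝ => (x : ℂ))]

lemma matProjPos_eq {H : Matrix (Fin n) (Fin n) ℂ} (hH : H.IsHermitian) :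
    matProjPos H = hH.cfc cp := by
  rw [matProjPos, dif_pos hH, cfc_def]
  congr 1
  congr 1
  funext i
  simp [cp, apply_ite (fun x : ℝ => (x : ℂ))]

lemma matProjNonneg_eq {H : Matrix (Fin n) (Fin n) ℂ} (hH : H.IsHermitian) :
    matProjNonneg H = hH.cfc cnn := by
  rw [matProjNonneg, dif_pos hH, cfc_def]
  congr 1
  congr 1
  funext i
  simp [cnn, apply_ite (fun x : ℝ => (x : ℂ))]

lemma cfcOfNeg {H : Matrix (Fin n) (Fin n) ℂ} (hH : H.IsHermitian) (f : ℝ → ℝ) :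
    Matrix.IsHermitian.cfc (hH.neg) f = hH.cfc (fun x => f (-x)) := by
  have hsa : IsSelfAdjoint H := hH
  have hcont : ContinuousOn f ((-·) '' spectrum ℝ H) :=
    ((Matrix.finite_real_spectrum (A := H)).image _).continuousOn f
  rw [← Matrix.IsHermitian.cfc_eq, ← Matrix.IsHermitian.cfc_eq]
  exact (cfc_comp_neg f H hcont hsa).symm

lemma matPosPart_neg_eq {H : Matrix (Fin n) (Fin n) ℂ} (hH : H.IsHermitian) :
    matPosPart (-H) = hH.cfc fm := by
  rw [matPosPart_eq hH.neg, cfcOfNeg]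
  exact cfcCongr hH fun x => by simp [fp, fm, neg_pos]

lemma matProjPos_neg_eq {H : Matrix (Fin n) (Fin n) ℂ} (hH : H.IsHermitian) :
    matProjPos (-H) = hH.cfc clt := by
  rw [matProjPos_eq hH.neg, cfcOfNeg]
  exact cfcCongr hH fun x => by simp [cp, clt, neg_pos]

lemma matProjNonneg_neg_eq {H : Matrix (Fin n) (Fin n) ℂ} (hH : H.IsHermitian) :
    matProjNonneg (-H) = hH.cfc cle := by
  rw [matProjNonneg_eq hH.neg, cfcOfNeg]
  exact cfcCongr hH fun x => by simp [cnn, cle, neg_nonneg]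

lemma herm_mul_zero_swap {S T : Matrix (Fin n) (Fin n) ℂ}
    (hS : S.IsHermitian) (hT : T.IsHermitian) (h : S * T = 0) : T * S = 0 := by
  have := congrArg Matrix.conjTranspose h
  simpa [Matrix.conjTranspose_mul, hS.eq, hT.eq] using this

lemma psd_cancel {T B : Matrix (Fin n) (Fin n) ℂ} (hT : T.PosSemidef)
    (h : Bᴴ * T * B = 0) : T * B = 0 := by
  obtain ⟨C, rfl⟩ := posSemidef_iff_eq_transpose_mul_self.mp hT
  have h1 : (C * B)ᴴ * (C * B) = 0 := by
    rw [Matrix.conjTranspose_mul]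
    calc Bᴴ * Cᴴ * (C * B) = Bᴴ * (Cᴴ * C) * B := by noncomm_ring
      _ = 0 := h
  have h2 : C * B = 0 := Matrix.conjTranspose_mul_self_eq_zero.mp h1
  calc Cᴴ * C * B = Cᴴ * (C * B) := by rw [Matrix.mul_assoc]
    _ = 0 := by rw [h2, Matrix.mul_zero]

-- pointwise function lemmas
lemma fp_nonneg (x : ℝ) : 0 ≤ fp x := by unfold fp; split <;> simp_all [le_of_lt]
lemma fm_nonneg (x : ℝ) : 0 ≤ fm x := by unfold fm; split <;> simp_all [le_of_lt] <;> linarith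
lemma cp_nonneg (x : ℝ) : 0 ≤ cp x := by unfold cp; split <;> norm_num
lemma cnn_nonneg (x : ℝ) : 0 ≤ cnn x := by unfold cnn; split <;> norm_num
lemma cle_nonneg (x : ℝ) : 0 ≤ cle x := by unfold cle; split <;> norm_num
lemma clt_nonneg (x : ℝ) : 0 ≤ clt x := by unfold clt; split <;> norm_num
lemma id_mul_cp (x : ℝ) : x * cp x = fp x := by unfold cp fp; by_cases h : 0 < x <;> simp [h]
lemma fp_mul_cp (x : ℝ) : fp x * cp x = fp x := by unfold cp fp; by_cases h : 0 < x <;> simp [h]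
lemma fp_sub_fm (x : ℝ) : fp x - fm x = x := by
  unfold fp fm; by_cases h : 0 < x <;> by_cases h' : x < 0 <;> simp [h, h'] <;> linarith
lemma cp_mul_cp (x : ℝ) : cp x * cp x = cp x := by unfold cp; by_cases h : 0 < x <;> simp [h]
lemma fm_mul_cp (x : ℝ) : fm x * cp x = 0 := by
  unfold fm cp; by_cases h : 0 < x <;> by_cases h' : x < 0 <;> simp [h, h'] <;> linarith
lemma fm_mul_clt (x : ℝ) : fm x * clt x = fm x := by
  unfold fm clt; by_cases h : x < 0 <;> simp [h]
lemma clt_mul_cnn (x : ℝ) : clt x * cnn x = 0 := by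
  unfold clt cnn; by_cases h : x < 0 <;> by_cases h' : 0 ≤ x <;> simp [h, h'] <;> linarith
lemma clt_mul_clt (x : ℝ) : clt x * clt x = clt x := by unfold clt; by_cases h : x < 0 <;> simp [h]
lemma one_sub_cp (x : ℝ) : (1 : ℝ) - cp x = cle x := by
  unfold cp cle; rcases lt_or_ge 0 x with h | h
  · simp [h, not_le.mpr h]
  · simp [not_lt.mpr h, h]
lemma one_sub_cnn (x : ℝ) : (1 : ℝ) - cnn x = clt x := by
  unfold cnn clt; rcases le_or_gt 0 x with h | h
  · simp [h, not_lt.mpr h]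
  · simp [h, not_le.mpr h]
lemma fp_zero_cp (x : ℝ) (h : fp x = 0) : cp x = 0 := by
  unfold fp at h; unfold cp; by_cases h' : 0 < x <;> simp_all <;> linarith
lemma fm_zero_clt (x : ℝ) (h : fm x = 0) : clt x = 0 := by
  unfold fm at h; unfold clt; by_cases h' : x < 0 <;> simp_all <;> linarith

end Stmt18


open Stmt18

/-- For any operator `A` and PSD `ρ`, `X`, `E` with `0 ≤ E ≤ 1`,
`Tr(A[X + (ρ − X)₊]A†) ≥ Tr(AρA†(1 − E) + AXA†E)`, with equality iff both
`A(X − ρ)₊A† = (A(X − ρ)A†)₊` and `P₍≥₎(A(X − ρ)A†) ≥ E ≥ P₍>₎(A(X − ρ)A†)`. -/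
theorem stmt_18 {n : ℕ} (A ρ X E : Matrix (Fin n) (Fin n) ℂ)
    (hρ : ρ.PosSemidef) (hX : X.PosSemidef)
    (hE : E.PosSemidef) (hE1 : ((1 : Matrix (Fin n) (Fin n) ℂ) - E).PosSemidef) :
    (A * ρ * Aᴴ * (1 - E) + A * X * Aᴴ * E).trace.re ≤
      (A * (X + matPosPart (ρ - X)) * Aᴴ).trace.re ∧
    ((A * ρ * Aᴴ * (1 - E) + A * X * Aᴴ * E).trace.re =
        (A * (X + matPosPart (ρ - X)) * Aᴴ).trace.re ↔
      (A * matPosPart (X - ρ) * Aᴴ = matPosPart (A * (X - ρ) * Aᴴ) ∧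
        (matProjNonneg (A * (X - ρ) * Aᴴ) - E).PosSemidef ∧
        (E - matProjPos (A * (X - ρ) * Aᴴ)).PosSemidef)) := by
  classical
  have hgH : (ρ - X).IsHermitian := hρ.1.sub hX.1
  have hKH : (A * (ρ - X) * Aᴴ).IsHermitian := isHermitian_mul_mul_conjTranspose A hgH
  -- rewrite all statement terms into cfc form
  have hXρ : X - ρ = -(ρ - X) := (neg_sub ρ X).symm
  have hAK : A * -(ρ - X) * Aᴴ = -(A * (ρ - X) * Aᴴ) := by noncomm_ring
  rw [matPosPart_eq hgH, hXρ, hAK, matPosPart_neg_eq hgH, matPosPart_neg_eq hKH,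
    matProjNonneg_neg_eq hKH, matProjPos_neg_eq hKH]
  set Gp := hgH.cfc fp with hGp_def
  set Gm := hgH.cfc fm with hGm_def
  set Kp := hKH.cfc fp with hKp_def
  set Km := hKH.cfc fm with hKm_def
  set P := hKH.cfc cp with hP_def
  set Qlt := hKH.cfc clt with hQlt_def
  set Qle := hKH.cfc cle with hQle_def
  -- cfc algebra facts
  have hKid : hKH.cfc (fun x => x) = A * (ρ - X) * Aᴴ := cfcId hKH
  have hgid : hgH.cfc (fun x => x) = ρ - X := cfcId hgH
  have hKP : (A * (ρ - X) * Aᴴ) * P = Kp := by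
    rw [← hKid, hP_def, hKp_def]
    exact (cfcMul hKH _ _).trans (cfcCongr hKH id_mul_cp)
  have hKpm : Kp - Km = A * (ρ - X) * Aᴴ := by
    rw [← hKid, hKp_def, hKm_def]
    exact (cfcSub hKH _ _).trans (cfcCongr hKH fp_sub_fm)
  have hGpm : Gp - Gm = ρ - X := by
    rw [← hgid, hGp_def, hGm_def]
    exact (cfcSub hgH _ _).trans (cfcCongr hgH fp_sub_fm)
  have hPP : P * P = P := by
    rw [hP_def]; exact (cfcMul hKH _ _).trans (cfcCongr hKH cp_mul_cp)
  have hKpP : Kp * P = Kp := by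
    rw [hKp_def, hP_def]; exact (cfcMul hKH _ _).trans (cfcCongr hKH fp_mul_cp)
  have hKmP : Km * P = 0 := by
    rw [hKm_def, hP_def]
    exact (cfcMul hKH _ _).trans ((cfcCongr hKH fm_mul_cp).trans (cfcZero hKH))
  have hKmQ : Km * Qlt = Km := by
    rw [hKm_def, hQlt_def]; exact (cfcMul hKH _ _).trans (cfcCongr hKH fm_mul_clt)
  have hQQ : Qlt * Qlt = Qlt := by
    rw [hQlt_def]; exact (cfcMul hKH _ _).trans (cfcCongr hKH clt_mul_clt)
  have hQleE : Qle = 1 - P := by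
    rw [hQle_def, hP_def, ← cfcOne hKH]
    exact ((cfcSub hKH _ _).trans (cfcCongr hKH one_sub_cp)).symm
  -- PSD facts
  have hGpP : Gp.PosSemidef := cfcPosSemidef hgH fp fp_nonneg
  have hGmP : Gm.PosSemidef := cfcPosSemidef hgH fm fm_nonneg
  have hKpPSD : Kp.PosSemidef := cfcPosSemidef hKH fp fp_nonneg
  have hKmPSD : Km.PosSemidef := cfcPosSemidef hKH fm fm_nonneg
  have hPpsd : P.PosSemidef := cfcPosSemidef hKH cp cp_nonneg
  have hQltpsd : Qlt.PosSemidef := cfcPosSemidef hKH clt clt_nonneg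
  have hQlepsd : Qle.PosSemidef := cfcPosSemidef hKH cle cle_nonneg
  have h1Ppsd : ((1 : Matrix (Fin n) (Fin n) ℂ) - P).PosSemidef := hQleE ▸ hQlepsd
  have hAGpP : (A * Gp * Aᴴ).PosSemidef := hGpP.mul_mul_conjTranspose_same A
  have hAGmP : (A * Gm * Aᴴ).PosSemidef := hGmP.mul_mul_conjTranspose_same A
  have hPH : Pᴴ = P := hPpsd.1
  have hQH : Qltᴴ = Qlt := hQltpsd.1
  have h1PH : ((1 : Matrix (Fin n) (Fin n) ℂ) - P)ᴴ = 1 - P := h1Ppsd.1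
  have h1QH : ((1 : Matrix (Fin n) (Fin n) ℂ) - Qlt)ᴴ = 1 - Qlt := by
    rw [conjTranspose_sub, conjTranspose_one, hQH]
  -- the four trace terms
  have n1 := trace_psd_mul_nonneg hAGpP h1Ppsd
  have n2 := trace_psd_mul_nonneg hAGmP hPpsd
  have n3 := trace_psd_mul_nonneg hKpPSD hE
  have n4 := trace_psd_mul_nonneg hKmPSD hE1
  have hKgp : A * Gp * Aᴴ - A * Gm * Aᴴ = A * (ρ - X) * Aᴴ := by rw [← hGpm]; noncomm_ring
  -- key matrix identity
  have keyM : A * (X + Gp) * Aᴴ = (A * ρ * Aᴴ * (1 - E) + A * X * Aᴴ * E) +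
      ((A * Gp * Aᴴ) * (1 - P) + (A * Gm * Aᴴ) * P + Kp * E + Km * (1 - E)) := by
    have h5 : (A * Gp * Aᴴ) * (1 - P) + (A * Gm * Aᴴ) * P = A * Gp * Aᴴ - Kp := by
      rw [← hKP, ← hKgp]; noncomm_ring
    rw [h5]
    have hKp_eq : Kp = A * (ρ - X) * Aᴴ + Km := by rw [← hKpm]; abel
    rw [hKp_eq]
    noncomm_ring
  have key : (A * (X + Gp) * Aᴴ).trace = (A * ρ * Aᴴ * (1 - E) + A * X * Aᴴ * E).trace +
      (((A * Gp * Aᴴ) * (1 - P)).trace + ((A * Gm * Aᴴ) * P).trace +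
        (Kp * E).trace + (Km * (1 - E)).trace) := by
    rw [keyM]; simp [Matrix.trace_add]
  have keyre : (A * (X + Gp) * Aᴴ).trace.re =
      (A * ρ * Aᴴ * (1 - E) + A * X * Aᴴ * E).trace.re +
      (((A * Gp * Aᴴ) * (1 - P)).trace.re + ((A * Gm * Aᴴ) * P).trace.re +
        (Kp * E).trace.re + (Km * (1 - E)).trace.re) := by
    rw [key]; simp [Complex.add_re]
  have re1 : 0 ≤ ((A * Gp * Aᴴ) * (1 - P)).trace.re := by
    have := (Complex.le_def.mp n1.1).1; simpa using this
  have re2 : 0 ≤ ((A * Gm * Aᴴ) * P).trace.re := by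
    have := (Complex.le_def.mp n2.1).1; simpa using this
  have re3 : 0 ≤ (Kp * E).trace.re := by
    have := (Complex.le_def.mp n3.1).1; simpa using this
  have re4 : 0 ≤ (Km * (1 - E)).trace.re := by
    have := (Complex.le_def.mp n4.1).1; simpa using this
  constructor
  · rw [keyre]; linarith
  -- equality part
  constructor
  · intro heq
    have hS : ((A * Gp * Aᴴ) * (1 - P)).trace.re = 0 ∧ ((A * Gm * Aᴴ) * P).trace.re = 0 ∧
        (Kp * E).trace.re = 0 ∧ (Km * (1 - E)).trace.re = 0 := by
      rw [keyre] at heq; refine ⟨by linarith, by linarith, by linarith, by linarith⟩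
    have toZero : ∀ z : ℂ, 0 ≤ z → z.re = 0 → z = 0 := fun z hz hre => by
      have him := (Complex.le_def.mp hz).2
      exact Complex.ext (by simp [hre]) (by simp [← him])
    have z1 : (A * Gp * Aᴴ) * (1 - P) = 0 := n1.2.mp (toZero _ n1.1 hS.1)
    have z2 : (A * Gm * Aᴴ) * P = 0 := n2.2.mp (toZero _ n2.1 hS.2.1)
    have z3 : Kp * E = 0 := n3.2.mp (toZero _ n3.1 hS.2.2.1)
    have z4 : Km * (1 - E) = 0 := n4.2.mp (toZero _ n4.1 hS.2.2.2)
    -- derive the three conditions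
    have e : (A * Gp * Aᴴ) * P = A * Gp * Aᴴ := by
      rw [Matrix.mul_sub, Matrix.mul_one, sub_eq_zero] at z1; exact z1.symm
    have hKpeq : Kp = A * Gp * Aᴴ := by rw [← hKP, ← hKgp, Matrix.sub_mul, e, z2, sub_zero]
    have r1 : A * Gm * Aᴴ = Km := by
      have h6 : Km = Kp - A * (ρ - X) * Aᴴ := by rw [← hKpm]; abel
      rw [h6, hKpeq, ← hKgp]; abel
    refine ⟨r1, ?_, ?_⟩
    · -- (Qle - E).PosSemidef
      have hPE : P * E = 0 := by
        rw [hKp_def] at z3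
        have := cfcMulEqZero hKH fp_zero_cp z3
        rwa [← hP_def] at this
      have hEP : E * P = 0 := herm_mul_zero_swap hPpsd.1 hE.1 hPE
      have hexp : (1 - P) * (1 - E) * (1 - P) = Qle - E := by
        rw [hQleE]
        simp only [Matrix.sub_mul, Matrix.mul_sub, Matrix.mul_one, Matrix.one_mul,
          hPP, hPE, hEP, Matrix.zero_mul, Matrix.mul_zero, sub_zero]
        abel
      rw [← hexp]
      have := hE1.mul_mul_conjTranspose_same (1 - P)
      rwa [h1PH] at this
    · -- (E - Qlt).PosSemidef
      have hQF : Qlt * (1 - E) = 0 := by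
        rw [hKm_def] at z4
        have := cfcMulEqZero hKH fm_zero_clt z4
        rwa [← hQlt_def] at this
      have hFQ : (1 - E) * Qlt = 0 := herm_mul_zero_swap hQltpsd.1 hE1.1 hQF
      have hQE : Qlt * E = Qlt := by
        rw [Matrix.mul_sub, Matrix.mul_one, sub_eq_zero] at hQF; exact hQF.symm
      have hEQ : E * Qlt = Qlt := by
        rw [Matrix.sub_mul, Matrix.one_mul, sub_eq_zero] at hFQ; exact hFQ.symm
      have hexp3 : (1 - Qlt) * E * (1 - Qlt) = E - Qlt := by
        simp only [Matrix.sub_mul, Matrix.mul_sub, Matrix.mul_one, Matrix.one_mul,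
          hQE, hEQ, hQQ]
        abel
      rw [← hexp3]
      have := hE.mul_mul_conjTranspose_same (1 - Qlt)
      rwa [h1QH] at this
  · rintro ⟨r1, r2, r3⟩
    -- derive the four zero products
    have hKpeq : Kp = A * Gp * Aᴴ := by
      have h7 : A * Gp * Aᴴ = A * (ρ - X) * Aᴴ + Km := by rw [← r1, ← hKgp]; abel
      rw [h7, ← hKpm]; abel
    have z1 : (A * Gp * Aᴴ) * (1 - P) = 0 := by
      rw [← hKpeq, Matrix.mul_sub, Matrix.mul_one, hKpP, sub_self]
    have z2 : (A * Gm * Aᴴ) * P = 0 := by rw [r1, hKmP]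
    have z3 : Kp * E = 0 := by
      have hpos : (P * E * P).PosSemidef := by
        have := hE.conjTranspose_mul_mul_same P; rwa [hPH] at this
      have hneg : (-(P * E * P)).PosSemidef := by
        have h0 : P * (Qle - E) * P = -(P * E * P) := by
          rw [hQleE]
          simp only [Matrix.sub_mul, Matrix.mul_sub, Matrix.mul_one, Matrix.one_mul, hPP]
          abel
        have := r2.conjTranspose_mul_mul_same P
        rwa [hPH, h0] at this
      have hPEP : P * E * P = 0 := psd_zero_of_neg hpos hneg
      have hEP : E * P = 0 := psd_cancel hE (by rwa [hPH])
      have hPE : P * E = 0 := herm_mul_zero_swap hE.1 hPpsd.1 hEP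
      rw [← hKpP, Matrix.mul_assoc, hPE, Matrix.mul_zero]
    have z4 : Km * (1 - E) = 0 := by
      have hpos : (Qlt * (1 - E) * Qlt).PosSemidef := by
        have := hE1.conjTranspose_mul_mul_same Qlt; rwa [hQH] at this
      have hneg : (-(Qlt * (1 - E) * Qlt)).PosSemidef := by
        have h0 : Qlt * (E - Qlt) * Qlt = -(Qlt * (1 - E) * Qlt) := by
          simp only [Matrix.sub_mul, Matrix.mul_sub, Matrix.mul_one, Matrix.one_mul, hQQ]
          abel
        have := r3.conjTranspose_mul_mul_same Qlt
        rwa [hQH, h0] at this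
      have hQFQ : Qlt * (1 - E) * Qlt = 0 := psd_zero_of_neg hpos hneg
      have hFQ : (1 - E) * Qlt = 0 := psd_cancel hE1 (by rwa [hQH])
      have hQF : Qlt * (1 - E) = 0 := herm_mul_zero_swap hE1.1 hQltpsd.1 hFQ
      rw [← hKmQ, Matrix.mul_assoc, hQF, Matrix.mul_zero]
    have t1 : ((A * Gp * Aᴴ) * (1 - P)).trace = 0 := n1.2.mpr z1
    have t2 : ((A * Gm * Aᴴ) * P).trace = 0 := n2.2.mpr z2
    have t3 : (Kp * E).trace = 0 := n3.2.mpr z3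
    have t4 : (Km * (1 - E)).trace = 0 := n4.2.mpr z4
    rw [keyre, t1, t2, t3, t4]
    simp
end
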